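/- arXiv:2401.13371 — 2 statements merged into one kernel-verified Lean document; each statement's English description precedes it below -/
import Mathlib

section
/- Let the CII estimate be Î_K = Σ_{ℓ=0}^{n−k} C(n−k,ℓ)·λ_{k,ℓ}·Σ_{W⊆K} (−1)^{k−|W|}·Î_{K,ℓ}^W, where for every W ⊆ K and ℓ ∈ L^{|W|} the stratum estimate Î_{K,ℓ}^W is given by the stratum sampling model, and Î_{K,ℓ}^W = I_{K,ℓ}^W for ℓ ∉ L^{|W|}. Then Î_K is an unbiased estimator of the cardinal interaction index: E[Î_K] = I_K. -/
open MeasureTheory ProbabilityTheory Finset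
open scoped ENNReal

/-- Finsets carry the discrete σ-algebra. -/
instance finsetMeasurableSpace (n : ℕ) : MeasurableSpace (Finset (Fin n)) := ⊤

/-- The stratum `{S ⊆ N∖K : |S| = ℓ}`. -/
def strata (n : ℕ) (K : Finset (Fin n)) (ℓ : ℕ) : Finset (Finset (Fin n)) :=
  Kᶜ.powerset.filter (fun S => S.card = ℓ)

/-- The stratum value `I_{K,ℓ}^W = (1/C(n−k,ℓ))·Σ_{S ⊆ N∖K, |S|=ℓ} ν(S ∪ W)`. -/
noncomputable def stratVal (n : ℕ) (ν : Finset (Fin n) → ℝ)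
    (K W : Finset (Fin n)) (ℓ : ℕ) : ℝ :=
  (((n - K.card).choose ℓ : ℝ))⁻¹ * ∑ S ∈ strata n K ℓ, ν (S ∪ W)

/-- The cardinal interaction index `I_K = Σ_{S ⊆ N∖K} λ_{k,|S|}·Δ_K(S)` with
discrete derivative `Δ_K(S) = Σ_{W ⊆ K} (−1)^{k−|W|}·ν(S ∪ W)`. -/
noncomputable def CII (n : ℕ) (ν : Finset (Fin n) → ℝ) (lam : ℕ → ℝ)
    (K : Finset (Fin n)) : ℝ :=
  ∑ S ∈ Kᶜ.powerset, lam S.card *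
    ∑ W ∈ K.powerset, (-1 : ℝ) ^ (K.card - W.card) * ν (S ∪ W)

/-- The stratum estimate: the sample mean `(1/M_{W,ℓ})·Σ_{m=1}^{M_{W,ℓ}} ν(S_m ∪ W)` for
estimated strata (`ℓ ∈ L^{|W|}`), and the exact stratum value otherwise. -/
noncomputable def IhatStrat {Ω : Type*} (n : ℕ) (ν : Finset (Fin n) → ℝ)
    (K : Finset (Fin n)) (L : ℕ → Finset ℕ)
    (S : Finset (Fin n) → ℕ → ℕ → Ω → Finset (Fin n))
    (M : Finset (Fin n) → ℕ → Ω → ℕ) (W : Finset (Fin n)) (ℓ : ℕ) (ω : Ω) : ℝ :=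
  if ℓ ∈ L W.card then
    ((M W ℓ ω : ℝ))⁻¹ * ∑ m ∈ Finset.range (M W ℓ ω), ν (S W ℓ m ω ∪ W)
  else stratVal n ν K W ℓ

/-- The CII estimate
`Î_K = Σ_{ℓ=0}^{n−k} C(n−k,ℓ)·λ_{k,ℓ}·Σ_{W⊆K} (−1)^{k−|W|}·Î_{K,ℓ}^W`. -/
noncomputable def IhatCII {Ω : Type*} (n : ℕ) (ν : Finset (Fin n) → ℝ)
    (K : Finset (Fin n)) (lam : ℕ → ℝ) (L : ℕ → Finset ℕ)
    (S : Finset (Fin n) → ℕ → ℕ → Ω → Finset (Fin n))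
    (M : Finset (Fin n) → ℕ → Ω → ℕ) (ω : Ω) : ℝ :=
  ∑ ℓ ∈ Finset.range (n - K.card + 1), ((n - K.card).choose ℓ : ℝ) * lam ℓ *
    ∑ W ∈ K.powerset, (-1 : ℝ) ^ (K.card - W.card) * IhatStrat n ν K L S M W ℓ ω

set_option linter.unusedSectionVars false
set_option linter.unusedVariables false

instance (n : ℕ) : MeasurableSingletonClass (Finset (Fin n)) :=
  ⟨fun _ => MeasurableSpace.measurableSet_top⟩

section Aux

variable {Ω : Type*} [MeasureSpace Ω] [IsProbabilityMeasure (ℙ : Measure Ω)] {n : ℕ}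

lemma integrable_comp_finset (f : Finset (Fin n) → ℝ) {X : Ω → Finset (Fin n)}
    (hX : Measurable X) : Integrable (fun ω => f (X ω)) ℙ := by
  have hmeas : Measurable fun ω => f (X ω) := (measurable_from_top (f := f)).comp hX
  refine (integrable_const (∑ T : Finset (Fin n), |f T|)).mono'
    hmeas.aestronglyMeasurable (Filter.Eventually.of_forall fun ω => ?_)
  simp only [Real.norm_eq_abs]
  exact Finset.single_le_sum (f := fun T => |f T|) (fun T _ => abs_nonneg _) (mem_univ _)

lemma integral_comp_finset (f : Finset (Fin n) → ℝ) {X : Ω → Finset (Fin n)}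
    (hX : Measurable X) :
    ∫ ω, f (X ω) ∂ℙ = ∑ T : Finset (Fin n), (ℙ {ω | X ω = T}).toReal * f T := by
  have h : ∀ ω, f (X ω) = ∑ T : Finset (Fin n),
      Set.indicator {ω' | X ω' = T} (fun _ => f T) ω := by
    intro ω
    rw [Finset.sum_eq_single_of_mem (X ω) (mem_univ _)]
    · rw [Set.indicator_of_mem (by simp)]
    · intro T _ hT
      exact Set.indicator_of_notMem (fun h => hT (h.symm)) _
  calc ∫ ω, f (X ω) ∂ℙ
      = ∫ ω, ∑ T : Finset (Fin n), Set.indicator {ω' | X ω' = T} (fun _ => f T) ω ∂ℙ := by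
        exact integral_congr_ae (Filter.Eventually.of_forall h)
    _ = ∑ T : Finset (Fin n), ∫ ω, Set.indicator {ω' | X ω' = T} (fun _ => f T) ω ∂ℙ :=
        integral_finset_sum _ (fun T _ =>
          (integrable_const (f T)).indicator (hX (measurableSet_singleton T)))
    _ = ∑ T : Finset (Fin n), (ℙ {ω' | X ω' = T}).toReal * f T := by
        refine Finset.sum_congr rfl fun T _ => ?_
        have hms : MeasurableSet {ω' | X ω' = T} := hX (measurableSet_singleton T)
        rw [integral_indicator_const (f T) hms, smul_eq_mul]
        rfl

lemma sampleMean_measurable (f : Finset (Fin n) → ℝ) (S : ℕ → Ω → Finset (Fin n))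
    (M : Ω → ℕ) (hS : ∀ m, Measurable (S m)) (hM : Measurable M) :
    Measurable (fun ω => (M ω : ℝ)⁻¹ * ∑ m ∈ Finset.range (M ω), f (S m ω)) := by
  have hseq : Measurable (fun ω => ((fun m => S m ω, M ω) : (ℕ → Finset (Fin n)) × ℕ)) :=
    (measurable_pi_lambda _ hS).prodMk hM
  have hh : Measurable (fun p : (ℕ → Finset (Fin n)) × ℕ =>
      (p.2 : ℝ)⁻¹ * ∑ m ∈ Finset.range p.2, f (p.1 m)) := by
    refine measurable_from_prod_countable_left fun j => ?_
    dsimp only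
    exact measurable_const.mul (Finset.measurable_sum _ (fun m _ =>
      (measurable_from_top (f := f)).comp (measurable_pi_apply m)))
  exact hh.comp hseq

lemma sampleMean_integrable (f : Finset (Fin n) → ℝ) (S : ℕ → Ω → Finset (Fin n))
    (M : Ω → ℕ) (hS : ∀ m, Measurable (S m)) (hM : Measurable M) :
    Integrable (fun ω => (M ω : ℝ)⁻¹ * ∑ m ∈ Finset.range (M ω), f (S m ω)) ℙ := by
  set C := ∑ T : Finset (Fin n), |f T| with hCdef
  have hC0 : 0 ≤ C := Finset.sum_nonneg fun T _ => abs_nonneg _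
  have hfC : ∀ T, |f T| ≤ C := fun T =>
    Finset.single_le_sum (f := fun T => |f T|) (fun T _ => abs_nonneg _) (mem_univ _)
  refine (integrable_const C).mono'
    (sampleMean_measurable f S M hS hM).aestronglyMeasurable
    (Filter.Eventually.of_forall fun ω => ?_)
  simp only [Real.norm_eq_abs]
  rcases Nat.eq_zero_or_pos (M ω) with h0 | hpos
  · simp [h0, hC0]
  · have hMne : (M ω : ℝ) ≠ 0 := Nat.cast_ne_zero.mpr hpos.ne'
    have hsum : |∑ m ∈ Finset.range (M ω), f (S m ω)| ≤ (M ω : ℝ) * C := by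
      calc |∑ m ∈ Finset.range (M ω), f (S m ω)|
          ≤ ∑ m ∈ Finset.range (M ω), |f (S m ω)| := Finset.abs_sum_le_sum_abs _ _
        _ ≤ ∑ _m ∈ Finset.range (M ω), C := Finset.sum_le_sum fun m _ => hfC _
        _ = (M ω : ℝ) * C := by simp [mul_comm]
    rw [abs_mul, abs_of_nonneg (inv_nonneg.mpr (Nat.cast_nonneg _))]
    calc (M ω : ℝ)⁻¹ * |∑ m ∈ Finset.range (M ω), f (S m ω)|
        ≤ (M ω : ℝ)⁻¹ * ((M ω : ℝ) * C) := by
          exact mul_le_mul_of_nonneg_left hsum (inv_nonneg.mpr (Nat.cast_nonneg _))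
      _ = C := by field_simp

lemma integral_sampleMean (f : Finset (Fin n) → ℝ) (S : ℕ → Ω → Finset (Fin n))
    (M : Ω → ℕ) (hS : ∀ m, Measurable (S m)) (hM : Measurable M) (μbar : ℝ)
    (hE : ∀ m, ∫ ω, f (S m ω) ∂ℙ = μbar)
    (hMpos : ∀ᵐ ω ∂ℙ, 1 ≤ M ω)
    (hindep : IndepFun M (fun ω => fun m => S m ω) ℙ) :
    ∫ ω, (M ω : ℝ)⁻¹ * ∑ m ∈ Finset.range (M ω), f (S m ω) ∂ℙ = μbar := by
  set g : Ω → ℝ := fun ω => (M ω : ℝ)⁻¹ * ∑ m ∈ Finset.range (M ω), f (S m ω) with hg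
  have hgint : Integrable g ℙ := sampleMean_integrable f S M hS hM
  set A : ℕ → Set Ω := fun j => {ω | M ω = j} with hA
  have hAmeas : ∀ j, MeasurableSet (A j) := fun j => hM (measurableSet_singleton j)
  have hAdisj : Pairwise (Function.onFun Disjoint A) := fun i j hij =>
    Set.disjoint_left.2 fun ω hi hj => hij (hi.symm.trans hj)
  have hAuniv : (⋃ j, A j) = Set.univ :=
    Set.eq_univ_of_forall fun ω => Set.mem_iUnion.2 ⟨M ω, rfl⟩
  have hsum1 : HasSum (fun j => ∫ ω in A j, g ω ∂ℙ) (∫ ω, g ω ∂ℙ) := by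
    have h := hasSum_integral_iUnion hAmeas hAdisj
      (f := g) (μ := ℙ) (by rw [hAuniv]; exact hgint.integrableOn)
    rwa [hAuniv, setIntegral_univ] at h
  have hP0 : ℙ (A 0) = 0 := by
    rw [ae_iff] at hMpos
    refine measure_mono_null (fun ω hω => ?_) hMpos
    simp only [hA, Set.mem_setOf_eq] at hω ⊢
    omega
  have hkey : ∀ j, ∫ ω in A j, g ω ∂ℙ = (ℙ (A j)).toReal * μbar := by
    intro j
    rcases Nat.eq_zero_or_pos j with rfl | hj
    · rw [setIntegral_measure_zero _ hP0, hP0]; simp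
    · have hjne : (j : ℝ) ≠ 0 := Nat.cast_ne_zero.mpr hj.ne'
      have hgA : Set.EqOn g (fun ω => (j : ℝ)⁻¹ * ∑ m ∈ Finset.range j, f (S m ω)) (A j) := by
        intro ω hω
        have : M ω = j := hω
        simp only [hg, this]
      rw [setIntegral_congr_fun (hAmeas j) hgA]
      have hm : ∀ m, ∫ ω in A j, f (S m ω) ∂ℙ = (ℙ (A j)).toReal * μbar := by
        intro m
        have hφ : Measurable (fun i : ℕ => if i = j then (1 : ℝ) else 0) :=
          measurable_of_countable _
        have hψ : Measurable (fun s : ℕ → Finset (Fin n) => f (s m)) :=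
          (measurable_from_top (f := f)).comp (measurable_pi_apply m)
        have hind : IndepFun (fun ω => if M ω = j then (1 : ℝ) else 0)
            (fun ω => f (S m ω)) ℙ := hindep.comp hφ hψ
        have hmul := hind.integral_fun_mul_eq_mul_integral
          ((hφ.comp hM).aestronglyMeasurable)
          ((integrable_comp_finset f (hS m)).aestronglyMeasurable)
        have h1 : ∫ ω in A j, f (S m ω) ∂ℙ
            = ∫ ω, (if M ω = j then (1 : ℝ) else 0) * f (S m ω) ∂ℙ := by
          rw [← integral_indicator (hAmeas j)]
          refine integral_congr_ae (Filter.Eventually.of_forall fun ω => ?_)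
          by_cases hω : M ω = j
          · simp [Set.indicator_of_mem, hω, hA, Set.mem_setOf_eq]
          · simp [Set.indicator_of_notMem, hω, hA, Set.mem_setOf_eq]
        have h2 : ∫ ω, (if M ω = j then (1 : ℝ) else 0) ∂ℙ = (ℙ (A j)).toReal := by
          have : (fun ω => if M ω = j then (1 : ℝ) else 0)
              = Set.indicator (A j) (fun _ => (1 : ℝ)) := by
            funext ω
            by_cases hω : M ω = j
            · simp [Set.indicator_of_mem, hω, hA, Set.mem_setOf_eq]
            · simp [Set.indicator_of_notMem, hω, hA, Set.mem_setOf_eq]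
          rw [this, integral_indicator_const _ (hAmeas j), smul_eq_mul, mul_one]
          rfl
        rw [h1, hmul, h2, hE m]
      rw [integral_const_mul, integral_finset_sum _
        (fun m _ => (integrable_comp_finset f (hS m)).integrableOn)]
      simp only [hm]
      rw [Finset.sum_const, Finset.card_range, nsmul_eq_mul, ← mul_assoc,
        inv_mul_cancel₀ hjne, one_mul]
  have hsum2 : HasSum (fun j => (ℙ (A j)).toReal * μbar) (∫ ω, g ω ∂ℙ) := by
    simpa only [hkey] using hsum1
  have hsum3 : HasSum (fun j => (ℙ (A j)).toReal) 1 := by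
    have h := hasSum_integral_iUnion hAmeas hAdisj
      (f := fun _ => (1 : ℝ)) (μ := ℙ) (by rw [hAuniv]; exact (integrable_const 1).integrableOn)
    rw [hAuniv, setIntegral_univ] at h
    simpa [measure_univ, measureReal_def] using h
  have := hsum3.mul_right μbar
  rw [one_mul] at this
  exact hsum2.unique this

end Aux

/-- **Unbiasedness of the CII estimate (Theorem 4.1).**  If for every `W ⊆ K` and
`ℓ ∈ L^{|W|}` the stratum estimate follows the stratum sampling model (i.i.d. samples
uniform on the stratum, with an a.s. positive count independent of the sample sequence),
then `E[Î_K] = I_K`. -/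
theorem cii_estimate_unbiased {Ω : Type*} [MeasureSpace Ω]
    [IsProbabilityMeasure (ℙ : Measure Ω)]
    (n : ℕ) (ν : Finset (Fin n) → ℝ) (K : Finset (Fin n)) (lam : ℕ → ℝ)
    (L : ℕ → Finset ℕ) (hL : ∀ w, L w ⊆ Finset.range (n - K.card + 1))
    (S : Finset (Fin n) → ℕ → ℕ → Ω → Finset (Fin n))
    (M : Finset (Fin n) → ℕ → Ω → ℕ)
    (hSmeas : ∀ W ℓ m, Measurable (S W ℓ m)) (hMmeas : ∀ W ℓ, Measurable (M W ℓ))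
    (hiid : ∀ W, W ⊆ K → ∀ ℓ ∈ L W.card,
      iIndepFun (m := fun _ => finsetMeasurableSpace n) (S W ℓ) ℙ)
    (hunif : ∀ W, W ⊆ K → ∀ ℓ ∈ L W.card, ∀ (m : ℕ) (T : Finset (Fin n)),
      ℙ {ω | S W ℓ m ω = T}
        = if T ∈ strata n K ℓ then ((strata n K ℓ).card : ℝ≥0∞)⁻¹ else 0)
    (hMpos : ∀ W, W ⊆ K → ∀ ℓ ∈ L W.card, ∀ᵐ ω ∂ℙ, 1 ≤ M W ℓ ω)
    (hindep : ∀ W, W ⊆ K → ∀ ℓ ∈ L W.card,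
      IndepFun (M W ℓ) (fun ω => fun m => S W ℓ m ω) ℙ) :
    ∫ ω, IhatCII n ν K lam L S M ω ∂ℙ = CII n ν lam K := by
  classical
  -- integrability of each stratum estimator
  have hIntStrat : ∀ (W : Finset (Fin n)) (ℓ : ℕ),
      Integrable (IhatStrat n ν K L S M W ℓ) ℙ := by
    intro W ℓ
    by_cases h : ℓ ∈ L W.card
    · have heq : IhatStrat n ν K L S M W ℓ = fun ω =>
          ((M W ℓ ω : ℝ))⁻¹ * ∑ m ∈ Finset.range (M W ℓ ω), ν (S W ℓ m ω ∪ W) := by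
        funext ω; simp [IhatStrat, h]
      rw [heq]
      exact sampleMean_integrable (fun T => ν (T ∪ W)) (S W ℓ) (M W ℓ) (hSmeas W ℓ) (hMmeas W ℓ)
    · have heq : IhatStrat n ν K L S M W ℓ = fun _ => stratVal n ν K W ℓ := by
        funext ω; simp [IhatStrat, h]
      rw [heq]
      exact integrable_const _
  -- exact value of each stratum estimator's expectation
  have hcard : ∀ ℓ, (strata n K ℓ).card = (n - K.card).choose ℓ := by
    intro ℓ
    rw [strata, ← Finset.powersetCard_eq_filter, Finset.card_powersetCard,
      Finset.card_compl, Fintype.card_fin]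
  have hIntegralStrat : ∀ W, W ⊆ K → ∀ ℓ,
      ∫ ω, IhatStrat n ν K L S M W ℓ ω ∂ℙ = stratVal n ν K W ℓ := by
    intro W hW ℓ
    by_cases h : ℓ ∈ L W.card
    · simp only [IhatStrat, if_pos h]
      apply integral_sampleMean (fun T => ν (T ∪ W)) (S W ℓ) (M W ℓ)
        (hSmeas W ℓ) (hMmeas W ℓ) _ ?_ (hMpos W hW ℓ h) (hindep W hW ℓ h)
      intro m
      rw [integral_comp_finset (fun T => ν (T ∪ W)) (hSmeas W ℓ m), stratVal]
      calc ∑ T : Finset (Fin n), (ℙ {ω | S W ℓ m ω = T}).toReal * ν (T ∪ W)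
          = ∑ T : Finset (Fin n),
              (if T ∈ strata n K ℓ then (((n - K.card).choose ℓ : ℝ))⁻¹ else 0) * ν (T ∪ W) := by
            refine Finset.sum_congr rfl fun T _ => ?_
            rw [hunif W hW ℓ h m T]
            split_ifs with hT
            · rw [← hcard ℓ]
              simp [ENNReal.toReal_inv]
            · simp
        _ = ∑ T ∈ strata n K ℓ, (((n - K.card).choose ℓ : ℝ))⁻¹ * ν (T ∪ W) := by
            simp [ite_mul, Finset.sum_ite_mem]
        _ = (((n - K.card).choose ℓ : ℝ))⁻¹ * ∑ T ∈ strata n K ℓ, ν (T ∪ W) := by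
            rw [Finset.mul_sum]
    · simp [IhatStrat, if_neg h, integral_const, measure_univ]
  -- compute the LHS
  have hInner : ∀ ℓ, Integrable (fun ω => ∑ W ∈ K.powerset,
      (-1 : ℝ) ^ (K.card - W.card) * IhatStrat n ν K L S M W ℓ ω) ℙ :=
    fun ℓ => integrable_finset_sum _ (fun W _ => (hIntStrat W ℓ).const_mul _)
  have hLHS : ∫ ω, IhatCII n ν K lam L S M ω ∂ℙ
      = ∑ ℓ ∈ Finset.range (n - K.card + 1), ((n - K.card).choose ℓ : ℝ) * lam ℓ *
          ∑ W ∈ K.powerset, (-1 : ℝ) ^ (K.card - W.card) * stratVal n ν K W ℓ := by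
    simp only [IhatCII]
    rw [integral_finset_sum _ (fun ℓ _ => (hInner ℓ).const_mul _)]
    refine Finset.sum_congr rfl fun ℓ _ => ?_
    rw [integral_const_mul, integral_finset_sum _ (fun W _ => (hIntStrat W ℓ).const_mul _)]
    congr 1
    refine Finset.sum_congr rfl fun W hW => ?_
    rw [integral_const_mul, hIntegralStrat W (Finset.mem_powerset.mp hW) ℓ]
  rw [hLHS]
  -- compute the RHS
  have hmaps : ∀ T ∈ Kᶜ.powerset, T.card ∈ Finset.range (n - K.card + 1) := by
    intro T hT
    rw [Finset.mem_range, Nat.lt_succ_iff]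
    calc T.card ≤ Kᶜ.card := Finset.card_le_card (Finset.mem_powerset.mp hT)
      _ = n - K.card := by rw [Finset.card_compl, Fintype.card_fin]
  rw [CII, ← Finset.sum_fiberwise_of_maps_to hmaps
    (fun T => lam T.card * ∑ W ∈ K.powerset, (-1 : ℝ) ^ (K.card - W.card) * ν (T ∪ W))]
  refine Finset.sum_congr rfl fun ℓ hℓ => ?_
  have hℓ' : ℓ ≤ n - K.card := Nat.lt_succ_iff.mp (Finset.mem_range.mp hℓ)
  have hC : ((n - K.card).choose ℓ : ℝ) ≠ 0 := Nat.cast_ne_zero.mpr (Nat.choose_pos hℓ').ne'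
  have hfilter : Kᶜ.powerset.filter (fun T => T.card = ℓ) = strata n K ℓ := rfl
  rw [hfilter]
  have h1 : ∑ T ∈ strata n K ℓ, lam T.card *
      ∑ W ∈ K.powerset, (-1 : ℝ) ^ (K.card - W.card) * ν (T ∪ W)
      = lam ℓ * ∑ W ∈ K.powerset, (-1 : ℝ) ^ (K.card - W.card) *
          ∑ T ∈ strata n K ℓ, ν (T ∪ W) := by
    calc ∑ T ∈ strata n K ℓ, lam T.card *
        ∑ W ∈ K.powerset, (-1 : ℝ) ^ (K.card - W.card) * ν (T ∪ W)
        = ∑ T ∈ strata n K ℓ, ∑ W ∈ K.powerset,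
            lam ℓ * ((-1 : ℝ) ^ (K.card - W.card) * ν (T ∪ W)) := by
          refine Finset.sum_congr rfl fun T hT => ?_
          have hTc : T.card = ℓ := (Finset.mem_filter.mp hT).2
          rw [hTc, Finset.mul_sum]
      _ = ∑ W ∈ K.powerset, ∑ T ∈ strata n K ℓ,
            lam ℓ * ((-1 : ℝ) ^ (K.card - W.card) * ν (T ∪ W)) := Finset.sum_comm
      _ = lam ℓ * ∑ W ∈ K.powerset, (-1 : ℝ) ^ (K.card - W.card) *
            ∑ T ∈ strata n K ℓ, ν (T ∪ W) := by
          rw [Finset.mul_sum]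
          refine Finset.sum_congr rfl fun W _ => ?_
          rw [← Finset.mul_sum, ← Finset.mul_sum]
  rw [h1]
  simp only [stratVal]
  have h2 : ∑ W ∈ K.powerset, (-1 : ℝ) ^ (K.card - W.card) *
      ((((n - K.card).choose ℓ : ℝ))⁻¹ * ∑ T ∈ strata n K ℓ, ν (T ∪ W))
      = (((n - K.card).choose ℓ : ℝ))⁻¹ * ∑ W ∈ K.powerset,
          (-1 : ℝ) ^ (K.card - W.card) * ∑ T ∈ strata n K ℓ, ν (T ∪ W) := by
    rw [Finset.mul_sum]
    exact Finset.sum_congr rfl fun W _ => by ring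
  rw [h2, show ((n - K.card).choose ℓ : ℝ) * lam ℓ *
      ((((n - K.card).choose ℓ : ℝ))⁻¹ * ∑ W ∈ K.powerset,
        (-1 : ℝ) ^ (K.card - W.card) * ∑ T ∈ strata n K ℓ, ν (T ∪ W))
      = (((n - K.card).choose ℓ : ℝ) * (((n - K.card).choose ℓ : ℝ))⁻¹) *
        (lam ℓ * ∑ W ∈ K.powerset,
          (-1 : ℝ) ^ (K.card - W.card) * ∑ T ∈ strata n K ℓ, ν (T ∪ W)) from by ring,
    mul_inv_cancel₀ hC, one_mul]
end

section
/- Let the CII estimate be Î_K = Σ_{ℓ=0}^{n−k} C(n−k,ℓ)·λ_{k,ℓ}·Σ_{W⊆K} (−1)^{k−|W|}·Î_{K,ℓ}^W, where for every W ⊆ K and ℓ ∈ L^{|W|} the stratum estimate Î_{K,ℓ}^W follows the stratum sampling model with count M_{W,ℓ} = 1 + Y_{W,ℓ}, Y_{W,ℓ} binomially distributed with parameters B̃ ≥ 1 and p_{W,ℓ} ≥ 1/γ_k, the sample sequences of distinct estimated strata being mutually independent and independent of the vector of all counts, and Î_{K,ℓ}^W = I_{K,ℓ}^W for ℓ ∉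 L^{|W|}. Then Var[Î_K] ≤ (γ_k/B̃)·Σ_{W⊆K} Σ_{ℓ∈L^{|W|}} C(n−k,ℓ)²·λ_{k,ℓ}²·σ²_{K,ℓ,W}. -/
open MeasureTheory ProbabilityTheory Finset
open scoped ENNReal

/-- The stratum variance `σ²_{K,ℓ,W}`: the variance of `ν(S ∪ W)` for `S` uniformly
distributed on `{S ⊆ N∖K : |S| = ℓ}`. -/
noncomputable def stratVar (n : ℕ) (ν : Finset (Fin n) → ℝ)
    (K W : Finset (Fin n)) (ℓ : ℕ) : ℝ :=
  (((n - K.card).choose ℓ : ℝ))⁻¹ *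
    ∑ S ∈ strata n K ℓ, (ν (S ∪ W) - stratVal n ν K W ℓ) ^ 2

/-- The constants `γ_2 = 2(n−1)²` and `γ_k = n^{k−1}·(n−k+1)²` for `k ≥ 3`. -/
noncomputable def gam (n k : ℕ) : ℝ :=
  if k = 2 then 2 * ((n : ℝ) - 1) ^ 2
  else (n : ℝ) ^ (k - 1) * ((n : ℝ) - k + 1) ^ 2

/-- The index set of estimated strata: pairs `(W, ℓ)` with `W ⊆ K` and `ℓ ∈ L^{|W|}`. -/
def EstIdx (n : ℕ) (K : Finset (Fin n)) (L : ℕ → Finset ℕ) : Type :=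
  {p : Finset (Fin n) × ℕ // p.1 ⊆ K ∧ p.2 ∈ L p.1.card}


lemma strata_card (n : ℕ) (K : Finset (Fin n)) (ℓ : ℕ) :
    (strata n K ℓ).card = (n - K.card).choose ℓ := by
  rw [strata, ← Finset.powersetCard_eq_filter, Finset.card_powersetCard, Finset.card_compl,
    Fintype.card_fin]

lemma stratVar_nonneg (n : ℕ) (ν : Finset (Fin n) → ℝ) (K W : Finset (Fin n)) (ℓ : ℕ) :
    0 ≤ stratVar n ν K W ℓ := by
  apply mul_nonneg (by positivity)
  exact Finset.sum_nonneg fun S _ => sq_nonneg _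

lemma abs_stratVal_le (n : ℕ) (ν : Finset (Fin n) → ℝ) (K W : Finset (Fin n)) (ℓ : ℕ)
    (C : ℝ) (hC : 0 ≤ C) (hν : ∀ T, |ν T| ≤ C) : |stratVal n ν K W ℓ| ≤ C := by
  rw [stratVal, abs_mul, abs_inv, Nat.abs_cast]
  rcases eq_or_ne ((n - K.card).choose ℓ) 0 with h | h
  · simp [h, hC]
  · calc (((n - K.card).choose ℓ : ℝ))⁻¹ * |∑ S ∈ strata n K ℓ, ν (S ∪ W)|
        ≤ (((n - K.card).choose ℓ : ℝ))⁻¹ * ((strata n K ℓ).card * C) := by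
          apply mul_le_mul_of_nonneg_left _ (by positivity)
          refine (Finset.abs_sum_le_sum_abs _ _).trans ?_
          calc ∑ S ∈ strata n K ℓ, |ν (S ∪ W)| ≤ ∑ S ∈ strata n K ℓ, C :=
                Finset.sum_le_sum fun S _ => hν _
            _ = (strata n K ℓ).card * C := by rw [Finset.sum_const, nsmul_eq_mul]
      _ = C := by
          rw [strata_card]
          field_simp
lemma second_moment (n : ℕ) (ν : Finset (Fin n) → ℝ) (K W : Finset (Fin n)) (ℓ : ℕ)
    (h : (n - K.card).choose ℓ ≠ 0) :
    (((n - K.card).choose ℓ : ℝ))⁻¹ * ∑ S ∈ strata n K ℓ, (ν (S ∪ W)) ^ 2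
      = stratVar n ν K W ℓ + stratVal n ν K W ℓ ^ 2 := by
  have hc : ((strata n K ℓ).card : ℝ) = ((n - K.card).choose ℓ : ℝ) := by
    rw [strata_card]
  have hne : (((n - K.card).choose ℓ : ℝ)) ≠ 0 := Nat.cast_ne_zero.mpr h
  have hI : ∑ S ∈ strata n K ℓ, ν (S ∪ W) = ((n - K.card).choose ℓ : ℝ) * stratVal n ν K W ℓ := by
    rw [stratVal]; field_simp
  rw [stratVar]
  have : ∑ S ∈ strata n K ℓ, (ν (S ∪ W) - stratVal n ν K W ℓ) ^ 2
      = ∑ S ∈ strata n K ℓ, (ν (S ∪ W)) ^ 2 - 2 * stratVal n ν K W ℓ *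
        (∑ S ∈ strata n K ℓ, ν (S ∪ W)) + (strata n K ℓ).card * stratVal n ν K W ℓ ^ 2 := by
    calc ∑ S ∈ strata n K ℓ, (ν (S ∪ W) - stratVal n ν K W ℓ) ^ 2
        = ∑ S ∈ strata n K ℓ,
            ((ν (S ∪ W)) ^ 2 - 2 * stratVal n ν K W ℓ * ν (S ∪ W) + stratVal n ν K W ℓ ^ 2) :=
          Finset.sum_congr rfl fun S _ => by ring
      _ = _ := by
          rw [Finset.sum_add_distrib, Finset.sum_sub_distrib, ← Finset.mul_sum,
            Finset.sum_const, nsmul_eq_mul]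
  rw [this, hc, hI]
  field_simp
  ring

instance inst_s1 (n : ℕ) : MeasurableSingletonClass (Finset (Fin n)) := ⟨fun _ => trivial⟩

lemma measurable_finset_fun {n : ℕ} {β : Type*} [MeasurableSpace β]
    (f : Finset (Fin n) → β) : Measurable f := measurable_of_countable f

lemma integral_comp_fintype {Ω : Type*} [MeasureSpace Ω] [IsFiniteMeasure (ℙ : Measure Ω)]
    {α : Type*} [Fintype α] [MeasurableSpace α] [MeasurableSingletonClass α]
    (X : Ω → α) (hX : Measurable X) (f : α → ℝ) :
    ∫ ω, f (X ω) = ∑ a : α, (ℙ {ω | X ω = a}).toReal * f a := by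
  have key : ∀ ω, f (X ω) = ∑ a : α, Set.indicator {ω' | X ω' = a} (fun _ => f a) ω := by
    intro ω
    rw [Finset.sum_eq_single (X ω)]
    · simp
    · intro b _ hb
      exact Set.indicator_of_notMem (fun h => hb (Eq.symm h)) _
    · simp
  calc ∫ ω, f (X ω) = ∫ ω, ∑ a : α, Set.indicator {ω' | X ω' = a} (fun _ => f a) ω := by
        exact integral_congr_ae (Filter.Eventually.of_forall key)
    _ = ∑ a : α, ∫ ω, Set.indicator {ω' | X ω' = a} (fun _ => f a) ω := by
        apply integral_finset_sum
        intro a _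
        exact (integrable_const _).indicator (hX (measurableSet_singleton a))
    _ = ∑ a : α, (ℙ {ω | X ω = a}).toReal * f a := by
        refine Finset.sum_congr rfl fun a _ => ?_
        have hset : {ω' | X ω' = a} = X ⁻¹' {a} := rfl
        rw [hset, integral_indicator_const _ (hX (measurableSet_singleton a)), smul_eq_mul]
        rfl

lemma exp_sample {Ω : Type*} [MeasureSpace Ω] [IsProbabilityMeasure (ℙ : Measure Ω)]
    (n : ℕ) (K : Finset (Fin n)) (ℓ : ℕ)
    (X : Ω → Finset (Fin n)) (hX : Measurable X)
    (hU : ∀ T, ℙ {ω | X ω = T}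
      = if T ∈ strata n K ℓ then ((strata n K ℓ).card : ℝ≥0∞)⁻¹ else 0)
    (f : Finset (Fin n) → ℝ) :
    ∫ ω, f (X ω) = (((n - K.card).choose ℓ : ℝ))⁻¹ * ∑ T ∈ strata n K ℓ, f T := by
  rw [integral_comp_fintype X hX f]
  have : ∀ a : Finset (Fin n), (ℙ {ω | X ω = a}).toReal * f a
      = if a ∈ strata n K ℓ then (((n - K.card).choose ℓ : ℝ))⁻¹ * f a else 0 := by
    intro a
    rw [hU a]
    split_ifs with h
    · rw [← strata_card n K ℓ]
      simp [ENNReal.toReal_inv]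
    · simp
  simp_rw [this]
  rw [Finset.sum_ite_mem, Finset.univ_inter, Finset.mul_sum]

lemma binom_sum_one (B : ℕ) (p : ℝ) :
    ∑ j ∈ Finset.range (B + 1), (B.choose j : ℝ) * p ^ j * (1 - p) ^ (B - j) = 1 := by
  have h := add_pow p (1 - p) B
  simp only [add_sub_cancel, one_pow] at h
  conv_rhs => rw [h]
  exact Finset.sum_congr rfl fun j _ => by ring

lemma binom_inv_sum_le (B : ℕ) (hB : 1 ≤ B) (p : ℝ) (hp0 : 0 < p) (hp1 : p ≤ 1)
    (γ : ℝ) (hγ : 0 < γ) (hpγ : 1 / γ ≤ p) :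
    ∑ j ∈ Finset.range (B + 1),
      (B.choose j : ℝ) * p ^ j * (1 - p) ^ (B - j) * (((j : ℝ) + 1))⁻¹ ≤ γ / B := by
  have hq0 : 0 ≤ 1 - p := by linarith
  have hB1 : (0:ℝ) < (B:ℝ) + 1 := by positivity
  have hBR : (1:ℝ) ≤ (B:ℝ) := by exact_mod_cast hB
  set T := ∑ j ∈ Finset.range (B + 1), ((B+1).choose (j+1) : ℝ) * p ^ j * (1 - p) ^ (B - j) with hT
  have key : ∀ j ∈ Finset.range (B + 1),
      (B.choose j : ℝ) * p ^ j * (1 - p) ^ (B - j) * (((j : ℝ) + 1))⁻¹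
      = ((B+1).choose (j+1) : ℝ) * p ^ j * (1 - p) ^ (B - j) * ((B:ℝ) + 1)⁻¹ := by
    intro j _
    have h := Nat.add_one_mul_choose_eq B j
    have h' : ((B:ℝ) + 1) * (B.choose j : ℝ) = ((B+1).choose (j+1) : ℝ) * ((j:ℝ) + 1) := by
      exact_mod_cast congrArg (Nat.cast : ℕ → ℝ) h
    have hj1 : ((j:ℝ) + 1) ≠ 0 := by positivity
    have hscal : (B.choose j : ℝ) * (((j : ℝ) + 1))⁻¹
        = ((B+1).choose (j+1) : ℝ) * ((B:ℝ) + 1)⁻¹ := by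
      field_simp
      linarith [h']
    calc (B.choose j : ℝ) * p ^ j * (1 - p) ^ (B - j) * (((j : ℝ) + 1))⁻¹
        = ((B.choose j : ℝ) * (((j : ℝ) + 1))⁻¹) * (p ^ j * (1 - p) ^ (B - j)) := by ring
      _ = (((B+1).choose (j+1) : ℝ) * ((B:ℝ) + 1)⁻¹) * (p ^ j * (1 - p) ^ (B - j)) := by
          rw [hscal]
      _ = _ := by ring
  rw [Finset.sum_congr rfl key, ← Finset.sum_mul]
  -- p * T ≤ 1
  have hpT : p * T ≤ 1 := by
    have expand : ∑ t ∈ Finset.range (B + 2), p ^ t * (1 - p) ^ (B + 1 - t) * ((B+1).choose t : ℝ)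
        = 1 := by
      have h := add_pow p (1 - p) (B + 1)
      simp only [add_sub_cancel, one_pow] at h
      exact h.symm
    rw [Finset.sum_range_succ'] at expand
    have hptT : p * T = ∑ j ∈ Finset.range (B + 1),
        p ^ (j+1) * (1 - p) ^ (B + 1 - (j+1)) * ((B+1).choose (j+1) : ℝ) := by
      rw [hT, Finset.mul_sum]
      refine Finset.sum_congr rfl fun j hj => ?_
      have hjB : j ≤ B := Nat.lt_succ_iff.mp (Finset.mem_range.mp hj)
      have he : B + 1 - (j + 1) = B - j := by omega
      rw [he]; ring
    have h0 : (0:ℝ) ≤ p ^ 0 * (1 - p) ^ (B + 1 - 0) * ((B+1).choose 0 : ℝ) := by positivity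
    rw [hptT]; linarith [expand]
  -- T ≤ 1/p, conclude
  have hTnn : 0 ≤ T := by
    apply Finset.sum_nonneg; intro j _; positivity
  have hT1p : T ≤ 1 / p := by
    rw [le_div_iff₀ hp0]; linarith [hpT]
  have step : T * ((B:ℝ) + 1)⁻¹ ≤ 1 / (p * ((B:ℝ) + 1)) := by
    calc T * ((B:ℝ)+1)⁻¹ ≤ (1/p) * ((B:ℝ)+1)⁻¹ :=
          mul_le_mul_of_nonneg_right hT1p (by positivity)
      _ = 1/(p*((B:ℝ)+1)) := by rw [one_div, one_div, mul_inv]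
  refine step.trans ?_
  rw [div_le_div_iff₀ (by positivity) (by linarith)]
  have h1 : 1 ≤ p * γ := (div_le_iff₀ hγ).mp hpγ
  nlinarith [h1, hBR, hp0.le, hγ.le]

lemma integrable_of_bound {Ω : Type*} [MeasureSpace Ω] [IsFiniteMeasure (ℙ : Measure Ω)]
    (f : Ω → ℝ) (C : ℝ) (hf : Measurable f) (h : ∀ ω, |f ω| ≤ C) : Integrable f ℙ := by
  apply (integrable_const C).mono' hf.aestronglyMeasurable
  exact Filter.Eventually.of_forall fun ω => by simpa [Real.norm_eq_abs] using h ω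

lemma abs_avg_le {C : ℝ} (hC : 0 ≤ C) (j : ℕ) (g : ℕ → ℝ) (h : ∀ m, |g m| ≤ C) :
    |((j:ℝ))⁻¹ * ∑ m ∈ Finset.range j, g m| ≤ C := by
  rcases Nat.eq_zero_or_pos j with rfl | hj
  · simpa using hC
  · have hjR : (0:ℝ) < (j:ℝ) := by exact_mod_cast hj
    rw [abs_mul, abs_inv, Nat.abs_cast]
    calc (j:ℝ)⁻¹ * |∑ m ∈ Finset.range j, g m| ≤ (j:ℝ)⁻¹ * ((j:ℝ) * C) := by
          apply mul_le_mul_of_nonneg_left _ (by positivity)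
          refine (Finset.abs_sum_le_sum_abs _ _).trans ?_
          calc ∑ m ∈ Finset.range j, |g m| ≤ ∑ m ∈ Finset.range j, C :=
                Finset.sum_le_sum fun m _ => h m
            _ = (j:ℝ) * C := by rw [Finset.sum_const, Finset.card_range, nsmul_eq_mul]
      _ = C := by field_simp
lemma integral_ite_count {Ω : Type*} [MeasureSpace Ω] [IsFiniteMeasure (ℙ : Measure Ω)]
    (Mc : Ω → ℕ) (hM : Measurable Mc) (j : ℕ) :
    ∫ ω, (if Mc ω = j then (1:ℝ) else 0) = (ℙ {ω | Mc ω = j}).toReal := by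
  have hms : MeasurableSet {ω | Mc ω = j} := hM (measurableSet_singleton j)
  have h1 : (fun ω => if Mc ω = j then (1:ℝ) else 0)
      = Set.indicator {ω | Mc ω = j} (fun _ => (1:ℝ)) := by
    ext ω; simp [Set.indicator_apply, Set.mem_setOf_eq]
  rw [h1, integral_indicator_const _ hms, smul_eq_mul, mul_one]
  rfl

lemma integral_ite_count_pair {Ω : Type*} [MeasureSpace Ω] [IsFiniteMeasure (ℙ : Measure Ω)]
    (Mc1 Mc2 : Ω → ℕ) (hM1 : Measurable Mc1) (hM2 : Measurable Mc2) (j j' : ℕ) :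
    ∫ ω, (if Mc1 ω = j ∧ Mc2 ω = j' then (1:ℝ) else 0)
      = (ℙ {ω | Mc1 ω = j ∧ Mc2 ω = j'}).toReal := by
  have hms : MeasurableSet {ω | Mc1 ω = j ∧ Mc2 ω = j'} := by
    have : {ω | Mc1 ω = j ∧ Mc2 ω = j'} = {ω | Mc1 ω = j} ∩ {ω | Mc2 ω = j'} := rfl
    rw [this]
    exact (hM1 (measurableSet_singleton j)).inter (hM2 (measurableSet_singleton j'))
  have h1 : (fun ω => if Mc1 ω = j ∧ Mc2 ω = j' then (1:ℝ) else 0)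
      = Set.indicator {ω | Mc1 ω = j ∧ Mc2 ω = j'} (fun _ => (1:ℝ)) := by
    ext ω; simp [Set.indicator_apply, Set.mem_setOf_eq]
  rw [h1, integral_indicator_const _ hms, smul_eq_mul, mul_one]
  rfl

lemma count_facts {Ω : Type*} [MeasureSpace Ω] [IsProbabilityMeasure (ℙ : Measure Ω)]
    (Mc : Ω → ℕ) (hM : Measurable Mc) (B : ℕ) (p : ℝ) (hp0 : 0 ≤ p) (hp1 : p ≤ 1)
    (hbin : ∀ j : ℕ, ℙ {ω | Mc ω = j + 1}
      = ENNReal.ofReal ((B.choose j : ℝ) * p ^ j * (1 - p) ^ (B - j))) :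
    (∀ᵐ ω ∂(ℙ : Measure Ω), Mc ω < B + 2) ∧ ℙ {ω | Mc ω = 0} = 0 ∧
      ∑ j ∈ Finset.range (B + 2), (ℙ {ω | Mc ω = j}).toReal = 1 := by
  have hq0 : (0:ℝ) ≤ 1 - p := by linarith
  have hnn : ∀ i : ℕ, (0:ℝ) ≤ (B.choose i : ℝ) * p ^ i * (1 - p) ^ (B - i) := by
    intro i; positivity
  have hsum1 : ∑ i ∈ Finset.range (B + 1), ℙ {ω | Mc ω = i + 1} = 1 := by
    calc ∑ i ∈ Finset.range (B + 1), ℙ {ω | Mc ω = i + 1}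
        = ∑ i ∈ Finset.range (B + 1),
            ENNReal.ofReal ((B.choose i : ℝ) * p ^ i * (1 - p) ^ (B - i)) :=
          Finset.sum_congr rfl fun i _ => hbin i
      _ = ENNReal.ofReal (∑ i ∈ Finset.range (B + 1),
            (B.choose i : ℝ) * p ^ i * (1 - p) ^ (B - i)) :=
          (ENNReal.ofReal_sum_of_nonneg fun i _ => hnn i).symm
      _ = 1 := by rw [binom_sum_one B p, ENNReal.ofReal_one]
  have hmeas : ∀ j : ℕ, MeasurableSet {ω | Mc ω = j} :=
    fun j => hM (measurableSet_singleton j)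
  have hUnion : ℙ (⋃ i ∈ Finset.range (B + 1), {ω | Mc ω = i + 1}) = 1 := by
    rw [measure_biUnion_finset ?hd fun i _ => hmeas (i + 1)]
    · exact hsum1
    case hd =>
      intro a _ b _ hab
      refine Set.disjoint_left.mpr fun ω h1 h2 => hab ?_
      have : a + 1 = b + 1 := h1.symm.trans h2
      omega
  have hP0 : ℙ {ω | Mc ω = 0} = 0 := by
    have hdisj : Disjoint {ω | Mc ω = 0} (⋃ i ∈ Finset.range (B + 1), {ω | Mc ω = i + 1}) := by
      refine Set.disjoint_left.mpr fun ω h1 h2 => ?_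
      rw [Set.mem_iUnion₂] at h2
      obtain ⟨i, _, hi⟩ := h2
      have : (0:ℕ) = i + 1 := h1.symm.trans hi
      omega
    have hmU : MeasurableSet (⋃ i ∈ Finset.range (B + 1), {ω | Mc ω = i + 1}) :=
      Finset.measurableSet_biUnion _ fun i _ => hmeas (i + 1)
    have : ℙ ({ω | Mc ω = 0} ∪ ⋃ i ∈ Finset.range (B + 1), {ω | Mc ω = i + 1})
        = ℙ {ω | Mc ω = 0} + ℙ (⋃ i ∈ Finset.range (B + 1), {ω | Mc ω = i + 1}) :=
      measure_union hdisj hmU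
    have hle : ℙ ({ω | Mc ω = 0} ∪ ⋃ i ∈ Finset.range (B + 1), {ω | Mc ω = i + 1}) ≤ 1 :=
      prob_le_one
    rw [this, hUnion] at hle
    have := ENNReal.le_of_add_le_add_right ENNReal.one_ne_top
      (by simpa using hle : ℙ {ω | Mc ω = 0} + 1 ≤ 0 + 1)
    exact le_zero_iff.mp this
  have hbig : ∀ j : ℕ, B + 2 ≤ j → ℙ {ω | Mc ω = j} = 0 := by
    intro j hj
    obtain ⟨i, rfl⟩ : ∃ i, j = i + 1 := ⟨j - 1, by omega⟩
    rw [hbin i, Nat.choose_eq_zero_of_lt (by omega)]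
    simp
  have hae : ∀ᵐ ω ∂(ℙ : Measure Ω), Mc ω < B + 2 := by
    rw [ae_iff]
    have hset : {ω | ¬ Mc ω < B + 2} = ⋃ i : ℕ, {ω | Mc ω = B + 2 + i} := by
      ext ω
      simp only [Set.mem_setOf_eq, Set.mem_iUnion, not_lt]
      constructor
      · intro h; exact ⟨Mc ω - (B + 2), by omega⟩
      · intro ⟨i, hi⟩; omega
    rw [hset]
    exact measure_iUnion_null fun i => hbig _ (by omega)
  refine ⟨hae, hP0, ?_⟩
  rw [Finset.sum_range_succ' (fun j => (ℙ {ω | Mc ω = j}).toReal) (B+1)]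
  have : ∀ i ∈ Finset.range (B + 1), (ℙ {ω | Mc ω = i + 1}).toReal
      = (B.choose i : ℝ) * p ^ i * (1 - p) ^ (B - i) := by
    intro i _
    rw [hbin i, ENNReal.toReal_ofReal (hnn i)]
  rw [Finset.sum_congr rfl this, binom_sum_one B p, hP0]
  simp


section Strat
variable {Ω : Type*} [MeasureSpace Ω] [IsProbabilityMeasure (ℙ : Measure Ω)]
  {n : ℕ} {ν : Finset (Fin n) → ℝ} {K W : Finset (Fin n)} {ℓ : ℕ}
  {C : ℝ} {Ss : ℕ → Ω → Finset (Fin n)}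

lemma exp_havg (hSm : ∀ m, Measurable (Ss m)) (hC : 0 ≤ C) (hν : ∀ T, |ν T| ≤ C)
    (hunif : ∀ (m : ℕ) (T : Finset (Fin n)), ℙ {ω | Ss m ω = T}
      = if T ∈ strata n K ℓ then ((strata n K ℓ).card : ℝ≥0∞)⁻¹ else 0)
    (j : ℕ) (hj : 1 ≤ j) :
    ∫ ω, ((j:ℝ))⁻¹ * ∑ m ∈ Finset.range j, ν (Ss m ω ∪ W) = stratVal n ν K W ℓ := by
  have hjR : ((j:ℝ)) ≠ 0 := by positivity
  rw [integral_const_mul _]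
  rw [integral_finset_sum _ (fun m _ => integrable_of_bound (fun ω => ν (Ss m ω ∪ W)) C
    ((measurable_finset_fun (fun T => ν (T ∪ W))).comp (hSm m)) (fun ω => hν _))]
  have : ∀ m ∈ Finset.range j, ∫ ω, ν (Ss m ω ∪ W) = stratVal n ν K W ℓ := by
    intro m _
    exact exp_sample n K ℓ (Ss m) (hSm m) (hunif m) (fun T => ν (T ∪ W))
  rw [Finset.sum_congr rfl this, Finset.sum_const, Finset.card_range, nsmul_eq_mul]
  field_simp

lemma exp_havg_sq (hSm : ∀ m, Measurable (Ss m)) (hC : 0 ≤ C) (hν : ∀ T, |ν T| ≤ C)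
    (hl : ℓ ≤ n - K.card)
    (hiid : iIndepFun (m := fun _ => finsetMeasurableSpace n) Ss ℙ)
    (hunif : ∀ (m : ℕ) (T : Finset (Fin n)), ℙ {ω | Ss m ω = T}
      = if T ∈ strata n K ℓ then ((strata n K ℓ).card : ℝ≥0∞)⁻¹ else 0)
    (j : ℕ) (hj : 1 ≤ j) :
    ∫ ω, (((j:ℝ))⁻¹ * ∑ m ∈ Finset.range j, ν (Ss m ω ∪ W)) ^ 2
      = stratVal n ν K W ℓ ^ 2 + stratVar n ν K W ℓ * ((j:ℝ))⁻¹ := by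
  have hjR : ((j:ℝ)) ≠ 0 := by positivity
  have hchoose : (n - K.card).choose ℓ ≠ 0 := (Nat.choose_pos hl).ne'
  have hsm : ∀ m, Measurable fun ω => ν (Ss m ω ∪ W) :=
    fun m => (measurable_finset_fun (fun T => ν (T ∪ W))).comp (hSm m)
  have expand : ∀ ω : Ω, (((j:ℝ))⁻¹ * ∑ m ∈ Finset.range j, ν (Ss m ω ∪ W)) ^ 2
      = ((j:ℝ))⁻¹ * ((j:ℝ))⁻¹ *
        ∑ m ∈ Finset.range j, ∑ m' ∈ Finset.range j, ν (Ss m ω ∪ W) * ν (Ss m' ω ∪ W) := by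
    intro ω
    rw [← Finset.sum_mul_sum]
    ring
  rw [integral_congr_ae (Filter.Eventually.of_forall expand), integral_const_mul _]
  have hintmm : ∀ m m' : ℕ, Integrable (fun ω => ν (Ss m ω ∪ W) * ν (Ss m' ω ∪ W)) ℙ := by
    intro m m'
    apply integrable_of_bound _ (C * C) ((hsm m).mul (hsm m'))
    intro ω
    rw [Pi.mul_apply, abs_mul]
    exact mul_le_mul (hν _) (hν _) (abs_nonneg _) hC
  rw [integral_finset_sum _ (fun m _ => integrable_finset_sum _ (fun m' _ => hintmm m m'))]
  have inner : ∀ m ∈ Finset.range j, ∫ ω, ∑ m' ∈ Finset.range j,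
      ν (Ss m ω ∪ W) * ν (Ss m' ω ∪ W)
      = ∑ m' ∈ Finset.range j, ∫ ω, ν (Ss m ω ∪ W) * ν (Ss m' ω ∪ W) := by
    intro m _
    exact integral_finset_sum _ (fun m' _ => hintmm m m')
  rw [Finset.sum_congr rfl inner]
  have key : ∀ m m' : ℕ, ∫ ω, ν (Ss m ω ∪ W) * ν (Ss m' ω ∪ W)
      = stratVal n ν K W ℓ ^ 2 + (if m = m' then stratVar n ν K W ℓ else 0) := by
    intro m m'
    rcases eq_or_ne m m' with rfl | hmm'
    · rw [if_pos rfl]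
      have : ∀ ω, ν (Ss m ω ∪ W) * ν (Ss m ω ∪ W) = (fun T => ν (T ∪ W) ^ 2) (Ss m ω) := by
        intro ω; simp [sq]
      rw [integral_congr_ae (Filter.Eventually.of_forall this),
        exp_sample n K ℓ (Ss m) (hSm m) (hunif m) (fun T => ν (T ∪ W) ^ 2),
        second_moment n ν K W ℓ hchoose]
      ring
    · rw [if_neg hmm', add_zero]
      have hind : IndepFun (fun ω => ν (Ss m ω ∪ W)) (fun ω => ν (Ss m' ω ∪ W)) ℙ :=
        (hiid.indepFun hmm').comp (measurable_finset_fun (fun T => ν (T ∪ W)))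
          (measurable_finset_fun (fun T => ν (T ∪ W)))
      rw [hind.integral_fun_mul_eq_mul_integral (hsm m).aestronglyMeasurable (hsm m').aestronglyMeasurable,
        exp_sample n K ℓ (Ss m) (hSm m) (hunif m) (fun T => ν (T ∪ W)),
        exp_sample n K ℓ (Ss m') (hSm m') (hunif m') (fun T => ν (T ∪ W))]
      unfold stratVal; ring
  have : ∑ m ∈ Finset.range j, ∑ m' ∈ Finset.range j,
      ∫ ω, ν (Ss m ω ∪ W) * ν (Ss m' ω ∪ W)
      = (j:ℝ) * (j:ℝ) * stratVal n ν K W ℓ ^ 2 + (j:ℝ) * stratVar n ν K W ℓ := by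
    simp_rw [key]
    rw [Finset.sum_congr rfl (fun m hm => Finset.sum_add_distrib)]
    rw [Finset.sum_add_distrib]
    congr 1
    · simp [Finset.sum_const, Finset.card_range]; ring
    · have : ∀ m ∈ Finset.range j,
          ∑ m' ∈ Finset.range j, (if m = m' then stratVar n ν K W ℓ else 0)
          = stratVar n ν K W ℓ := by
        intro m hm
        rw [Finset.sum_ite_eq (Finset.range j) m (fun _ => stratVar n ν K W ℓ), if_pos hm]
      rw [Finset.sum_congr rfl this, Finset.sum_const, Finset.card_range, nsmul_eq_mul]
  rw [this]
  field_simp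

lemma strat_moments (hSm : ∀ m, Measurable (Ss m)) (hC : 0 ≤ C) (hν : ∀ T, |ν T| ≤ C)
    (hl : ℓ ≤ n - K.card)
    (hiid : iIndepFun (m := fun _ => finsetMeasurableSpace n) Ss ℙ)
    (hunif : ∀ (m : ℕ) (T : Finset (Fin n)), ℙ {ω | Ss m ω = T}
      = if T ∈ strata n K ℓ then ((strata n K ℓ).card : ℝ≥0∞)⁻¹ else 0)
    (Mc : Ω → ℕ) (hM : Measurable Mc)
    (B : ℕ) (p : ℝ) (hp0 : 0 ≤ p) (hp1 : p ≤ 1)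
    (hbin : ∀ j : ℕ, ℙ {ω | Mc ω = j + 1}
      = ENNReal.ofReal ((B.choose j : ℝ) * p ^ j * (1 - p) ^ (B - j)))
    (hMS : IndepFun Mc (fun ω m => Ss m ω) ℙ) :
    (∫ ω, ((Mc ω : ℝ))⁻¹ * ∑ m ∈ Finset.range (Mc ω), ν (Ss m ω ∪ W)
        = stratVal n ν K W ℓ)
    ∧ ∫ ω, (((Mc ω : ℝ))⁻¹ * ∑ m ∈ Finset.range (Mc ω), ν (Ss m ω ∪ W)) ^ 2
        = stratVal n ν K W ℓ ^ 2 +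
          (∑ j ∈ Finset.range (B + 2), (ℙ {ω | Mc ω = j}).toReal * ((j:ℝ))⁻¹) *
            stratVar n ν K W ℓ := by
  obtain ⟨hae, hP0, hPsum⟩ := count_facts Mc hM B p hp0 hp1 hbin
  have hsm : ∀ m, Measurable fun ω => ν (Ss m ω ∪ W) :=
    fun m => (measurable_finset_fun (fun T => ν (T ∪ W))).comp (hSm m)
  set h : ℕ → Ω → ℝ := fun j ω => ((j:ℝ))⁻¹ * ∑ m ∈ Finset.range j, ν (Ss m ω ∪ W) with hh
  have hmeas_h : ∀ j, Measurable (h j) :=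
    fun j => (Finset.measurable_sum _ (fun m _ => hsm m)).const_mul _
  have hbdd_h : ∀ j ω, |h j ω| ≤ C := fun j ω => abs_avg_le hC j _ (fun m => hν _)
  have hseqm : Measurable (fun ω (m : ℕ) => Ss m ω) :=
    measurable_pi_lambda _ (fun m => hSm m)
  have Et : ∀ (j : ℕ) (g : (ℕ → Finset (Fin n)) → ℝ), Measurable g →
      ∫ ω, (if Mc ω = j then (1:ℝ) else 0) * g (fun m => Ss m ω)
      = (ℙ {ω | Mc ω = j}).toReal * ∫ ω, g (fun m => Ss m ω) := by
    intro j g hg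
    have hφ : Measurable (fun i : ℕ => if i = j then (1:ℝ) else 0) :=
      measurable_of_countable _
    have hind : IndepFun (fun ω => if Mc ω = j then (1:ℝ) else 0)
        (fun ω => g (fun m => Ss m ω)) ℙ := hMS.comp hφ hg
    rw [hind.integral_fun_mul_eq_mul_integral ((hφ.comp hM).aestronglyMeasurable)
      ((hg.comp hseqm).aestronglyMeasurable), integral_ite_count Mc hM j]
  set ψ : ℕ → (ℕ → Finset (Fin n)) → ℝ :=
    fun j a => ((j:ℝ))⁻¹ * ∑ m ∈ Finset.range j, ν (a m ∪ W) with hψ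
  have hψm : ∀ j, Measurable (ψ j) := fun j =>
    (Finset.measurable_sum _ (fun m _ =>
      (measurable_finset_fun (fun T => ν (T ∪ W))).comp (measurable_pi_apply m))).const_mul _
  have hint_t : ∀ j, Integrable (fun ω => (if Mc ω = j then (1:ℝ) else 0) * h j ω) ℙ := by
    intro j
    apply integrable_of_bound _ C
    · exact (Measurable.ite (hM (measurableSet_singleton j)) measurable_const
        measurable_const).mul (hmeas_h j)
    · intro ω
      rw [abs_mul]
      rcases eq_or_ne (Mc ω) j with hc | hc
      · simpa [hc] using hbdd_h j ω
      · simp [hc, hC]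
  have hint_t2 : ∀ j, Integrable (fun ω => (if Mc ω = j then (1:ℝ) else 0) * h j ω ^ 2) ℙ := by
    intro j
    apply integrable_of_bound _ (C * C)
    · exact (Measurable.ite (hM (measurableSet_singleton j)) measurable_const
        measurable_const).mul ((hmeas_h j).pow_const 2)
    · intro ω
      rw [abs_mul]
      rcases eq_or_ne (Mc ω) j with hc | hc
      · have : |h j ω ^ 2| ≤ C * C := by
          rw [sq, abs_mul]
          exact mul_le_mul (hbdd_h j ω) (hbdd_h j ω) (abs_nonneg _) hC
        simpa [hc] using this
      · simp [hc]
        positivity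
  constructor
  · have hXdecomp : ∀ᵐ ω ∂(ℙ : Measure Ω),
        ((Mc ω : ℝ))⁻¹ * ∑ m ∈ Finset.range (Mc ω), ν (Ss m ω ∪ W)
        = ∑ j ∈ Finset.range (B+2), (if Mc ω = j then (1:ℝ) else 0) * h j ω := by
      filter_upwards [hae] with ω hω
      rw [show (∑ j ∈ Finset.range (B+2), (if Mc ω = j then (1:ℝ) else 0) * h j ω)
          = (if Mc ω = Mc ω then (1:ℝ) else 0) * h (Mc ω) ω from
        Finset.sum_eq_single _ (fun b _ hb => by rw [if_neg (fun hc => hb hc.symm), zero_mul])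
          (fun hnot => absurd (Finset.mem_range.mpr hω) hnot), if_pos rfl, one_mul]
    calc ∫ ω, ((Mc ω : ℝ))⁻¹ * ∑ m ∈ Finset.range (Mc ω), ν (Ss m ω ∪ W)
        = ∫ ω, ∑ j ∈ Finset.range (B+2), (if Mc ω = j then (1:ℝ) else 0) * h j ω :=
          integral_congr_ae hXdecomp
      _ = ∑ j ∈ Finset.range (B+2), ∫ ω, (if Mc ω = j then (1:ℝ) else 0) * h j ω :=
          integral_finset_sum _ (fun j _ => hint_t j)
      _ = ∑ j ∈ Finset.range (B+2), (ℙ {ω | Mc ω = j}).toReal * stratVal n ν K W ℓ := by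
          refine Finset.sum_congr rfl fun j hj => ?_
          rw [Et j (ψ j) (hψm j)]
          rcases Nat.eq_zero_or_pos j with rfl | hjpos
          · rw [hP0]; simp
          · rw [show (∫ ω, ψ j (fun m => Ss m ω)) = stratVal n ν K W ℓ from
              exp_havg hSm hC hν hunif j hjpos]
      _ = stratVal n ν K W ℓ := by rw [← Finset.sum_mul, hPsum, one_mul]
  · have hXdecomp : ∀ᵐ ω ∂(ℙ : Measure Ω),
        (((Mc ω : ℝ))⁻¹ * ∑ m ∈ Finset.range (Mc ω), ν (Ss m ω ∪ W)) ^ 2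
        = ∑ j ∈ Finset.range (B+2), (if Mc ω = j then (1:ℝ) else 0) * h j ω ^ 2 := by
      filter_upwards [hae] with ω hω
      rw [show (∑ j ∈ Finset.range (B+2), (if Mc ω = j then (1:ℝ) else 0) * h j ω ^ 2)
          = (if Mc ω = Mc ω then (1:ℝ) else 0) * h (Mc ω) ω ^ 2 from
        Finset.sum_eq_single _ (fun b _ hb => by rw [if_neg (fun hc => hb hc.symm), zero_mul])
          (fun hnot => absurd (Finset.mem_range.mpr hω) hnot), if_pos rfl, one_mul]
    calc ∫ ω, (((Mc ω : ℝ))⁻¹ * ∑ m ∈ Finset.range (Mc ω), ν (Ss m ω ∪ W)) ^ 2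
        = ∫ ω, ∑ j ∈ Finset.range (B+2), (if Mc ω = j then (1:ℝ) else 0) * h j ω ^ 2 :=
          integral_congr_ae hXdecomp
      _ = ∑ j ∈ Finset.range (B+2), ∫ ω, (if Mc ω = j then (1:ℝ) else 0) * h j ω ^ 2 :=
          integral_finset_sum _ (fun j _ => hint_t2 j)
      _ = ∑ j ∈ Finset.range (B+2), (ℙ {ω | Mc ω = j}).toReal *
            (stratVal n ν K W ℓ ^ 2 + stratVar n ν K W ℓ * ((j:ℝ))⁻¹) := by
          refine Finset.sum_congr rfl fun j hj => ?_
          rw [Et j (fun a => ψ j a ^ 2) ((hψm j).pow_const 2)]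
          rcases Nat.eq_zero_or_pos j with rfl | hjpos
          · rw [hP0]; simp
          · rw [show (∫ ω, ψ j (fun m => Ss m ω) ^ 2)
                = stratVal n ν K W ℓ ^ 2 + stratVar n ν K W ℓ * ((j:ℝ))⁻¹ from
              exp_havg_sq hSm hC hν hl hiid hunif j hjpos]
      _ = stratVal n ν K W ℓ ^ 2 +
          (∑ j ∈ Finset.range (B + 2), (ℙ {ω | Mc ω = j}).toReal * ((j:ℝ))⁻¹) *
            stratVar n ν K W ℓ := by
          rw [Finset.sum_congr rfl (fun j _ => mul_add _ _ _), Finset.sum_add_distrib,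
            ← Finset.sum_mul, hPsum, one_mul, Finset.sum_mul]
          congr 1
          exact Finset.sum_congr rfl fun j _ => by ring

lemma cross_moment {W2 : Finset (Fin n)} {ℓ2 : ℕ} {Ss2 : ℕ → Ω → Finset (Fin n)}
    (hSm : ∀ m, Measurable (Ss m)) (hSm2 : ∀ m, Measurable (Ss2 m))
    (hC : 0 ≤ C) (hν : ∀ T, |ν T| ≤ C)
    (hunif : ∀ (m : ℕ) (T : Finset (Fin n)), ℙ {ω | Ss m ω = T}
      = if T ∈ strata n K ℓ then ((strata n K ℓ).card : ℝ≥0∞)⁻¹ else 0)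
    (hunif2 : ∀ (m : ℕ) (T : Finset (Fin n)), ℙ {ω | Ss2 m ω = T}
      = if T ∈ strata n K ℓ2 then ((strata n K ℓ2).card : ℝ≥0∞)⁻¹ else 0)
    (Mc Mc2 : Ω → ℕ) (hM : Measurable Mc) (hM2 : Measurable Mc2)
    (B : ℕ) (p p2 : ℝ) (hp0 : 0 ≤ p) (hp1 : p ≤ 1) (hp20 : 0 ≤ p2) (hp21 : p2 ≤ 1)
    (hbin : ∀ j : ℕ, ℙ {ω | Mc ω = j + 1}
      = ENNReal.ofReal ((B.choose j : ℝ) * p ^ j * (1 - p) ^ (B - j)))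
    (hbin2 : ∀ j : ℕ, ℙ {ω | Mc2 ω = j + 1}
      = ENNReal.ofReal ((B.choose j : ℝ) * p2 ^ j * (1 - p2) ^ (B - j)))
    (hseq : IndepFun (fun ω (m : ℕ) => Ss m ω) (fun ω (m : ℕ) => Ss2 m ω) ℙ)
    (hMM : IndepFun (fun ω => (Mc ω, Mc2 ω))
      (fun ω => ((fun m => Ss m ω), (fun m => Ss2 m ω))) ℙ) :
    ∫ ω, (((Mc ω : ℝ))⁻¹ * ∑ m ∈ Finset.range (Mc ω), ν (Ss m ω ∪ W)) *
        (((Mc2 ω : ℝ))⁻¹ * ∑ m ∈ Finset.range (Mc2 ω), ν (Ss2 m ω ∪ W2))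
      = stratVal n ν K W ℓ * stratVal n ν K W2 ℓ2 := by
  obtain ⟨hae1, hP01, hPsum1⟩ := count_facts Mc hM B p hp0 hp1 hbin
  obtain ⟨hae2, hP02, _⟩ := count_facts Mc2 hM2 B p2 hp20 hp21 hbin2
  set h1 : ℕ → Ω → ℝ := fun j ω => ((j:ℝ))⁻¹ * ∑ m ∈ Finset.range j, ν (Ss m ω ∪ W) with hh1
  set h2 : ℕ → Ω → ℝ := fun j ω => ((j:ℝ))⁻¹ * ∑ m ∈ Finset.range j, ν (Ss2 m ω ∪ W2) with hh2
  have hsm1 : ∀ m, Measurable fun ω => ν (Ss m ω ∪ W) :=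
    fun m => (measurable_finset_fun (fun T => ν (T ∪ W))).comp (hSm m)
  have hsm2 : ∀ m, Measurable fun ω => ν (Ss2 m ω ∪ W2) :=
    fun m => (measurable_finset_fun (fun T => ν (T ∪ W2))).comp (hSm2 m)
  have hmeas_h1 : ∀ j, Measurable (h1 j) :=
    fun j => (Finset.measurable_sum _ (fun m _ => hsm1 m)).const_mul _
  have hmeas_h2 : ∀ j, Measurable (h2 j) :=
    fun j => (Finset.measurable_sum _ (fun m _ => hsm2 m)).const_mul _
  have hbdd_h1 : ∀ j ω, |h1 j ω| ≤ C := fun j ω => abs_avg_le hC j _ (fun m => hν _)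
  have hbdd_h2 : ∀ j ω, |h2 j ω| ≤ C := fun j ω => abs_avg_le hC j _ (fun m => hν _)
  have hseqm1 : Measurable (fun ω (m : ℕ) => Ss m ω) :=
    measurable_pi_lambda _ (fun m => hSm m)
  have hseqm2 : Measurable (fun ω (m : ℕ) => Ss2 m ω) :=
    measurable_pi_lambda _ (fun m => hSm2 m)
  set ψ1 : ℕ → (ℕ → Finset (Fin n)) → ℝ :=
    fun j a => ((j:ℝ))⁻¹ * ∑ m ∈ Finset.range j, ν (a m ∪ W) with hψ1
  set ψ2 : ℕ → (ℕ → Finset (Fin n)) → ℝ :=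
    fun j a => ((j:ℝ))⁻¹ * ∑ m ∈ Finset.range j, ν (a m ∪ W2) with hψ2
  have hψ1m : ∀ j, Measurable (ψ1 j) := fun j =>
    (Finset.measurable_sum _ (fun m _ =>
      (measurable_finset_fun (fun T => ν (T ∪ W))).comp (measurable_pi_apply m))).const_mul _
  have hψ2m : ∀ j, Measurable (ψ2 j) := fun j =>
    (Finset.measurable_sum _ (fun m _ =>
      (measurable_finset_fun (fun T => ν (T ∪ W2))).comp (measurable_pi_apply m))).const_mul _
  -- key independent-product identity for each term
  have Et2 : ∀ (j j' : ℕ),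
      ∫ ω, (if Mc ω = j ∧ Mc2 ω = j' then (1:ℝ) else 0) *
        (ψ1 j (fun m => Ss m ω) * ψ2 j' (fun m => Ss2 m ω))
      = (ℙ {ω | Mc ω = j ∧ Mc2 ω = j'}).toReal *
        ((∫ ω, ψ1 j (fun m => Ss m ω)) * (∫ ω, ψ2 j' (fun m => Ss2 m ω))) := by
    intro j j'
    have hφ : Measurable (fun q : ℕ × ℕ => if q.1 = j ∧ q.2 = j' then (1:ℝ) else 0) :=
      measurable_of_countable _
    have hΨ : Measurable (fun a : (ℕ → Finset (Fin n)) × (ℕ → Finset (Fin n)) =>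
        ψ1 j a.1 * ψ2 j' a.2) :=
      ((hψ1m j).comp measurable_fst).mul ((hψ2m j').comp measurable_snd)
    have hind : IndepFun (fun ω => if Mc ω = j ∧ Mc2 ω = j' then (1:ℝ) else 0)
        (fun ω => ψ1 j (fun m => Ss m ω) * ψ2 j' (fun m => Ss2 m ω)) ℙ := hMM.comp hφ hΨ
    have hpairM : Measurable (fun ω => (Mc ω, Mc2 ω)) := hM.prodMk hM2
    have hpairS : Measurable (fun ω => ((fun m => Ss m ω), (fun m => Ss2 m ω))) :=
      hseqm1.prodMk hseqm2
    rw [hind.integral_fun_mul_eq_mul_integral ((hφ.comp hpairM).aestronglyMeasurable)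
      ((hΨ.comp hpairS).aestronglyMeasurable),
      integral_ite_count_pair Mc Mc2 hM hM2 j j']
    congr 1
    have hind2 : IndepFun (fun ω => ψ1 j (fun m => Ss m ω))
        (fun ω => ψ2 j' (fun m => Ss2 m ω)) ℙ := hseq.comp (hψ1m j) (hψ2m j')
    exact hind2.integral_fun_mul_eq_mul_integral (((hψ1m j).comp hseqm1).aestronglyMeasurable)
      (((hψ2m j').comp hseqm2).aestronglyMeasurable)
  -- a.e. decomposition of the product
  have hdecomp : ∀ᵐ ω ∂(ℙ : Measure Ω),
      (((Mc ω : ℝ))⁻¹ * ∑ m ∈ Finset.range (Mc ω), ν (Ss m ω ∪ W)) *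
        (((Mc2 ω : ℝ))⁻¹ * ∑ m ∈ Finset.range (Mc2 ω), ν (Ss2 m ω ∪ W2))
      = ∑ j ∈ Finset.range (B+2), ∑ j' ∈ Finset.range (B+2),
          (if Mc ω = j ∧ Mc2 ω = j' then (1:ℝ) else 0) * (h1 j ω * h2 j' ω) := by
    filter_upwards [hae1, hae2] with ω h1ω h2ω
    have inner : ∀ j, (∑ j' ∈ Finset.range (B+2),
        (if Mc ω = j ∧ Mc2 ω = j' then (1:ℝ) else 0) * (h1 j ω * h2 j' ω))
        = (if Mc ω = j ∧ Mc2 ω = Mc2 ω then (1:ℝ) else 0) * (h1 j ω * h2 (Mc2 ω) ω) := by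
      intro j
      refine Finset.sum_eq_single _ (fun b _ hb => by
        rw [if_neg (fun hc => hb hc.2.symm), zero_mul])
        (fun hnot => absurd (Finset.mem_range.mpr h2ω) hnot)
    rw [Finset.sum_congr rfl (fun j _ => inner j)]
    rw [show (∑ j ∈ Finset.range (B+2),
        (if Mc ω = j ∧ Mc2 ω = Mc2 ω then (1:ℝ) else 0) * (h1 j ω * h2 (Mc2 ω) ω))
        = (if Mc ω = Mc ω ∧ Mc2 ω = Mc2 ω then (1:ℝ) else 0) *
            (h1 (Mc ω) ω * h2 (Mc2 ω) ω) from
      Finset.sum_eq_single _ (fun b _ hb => by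
        rw [if_neg (fun hc => hb hc.1.symm), zero_mul])
        (fun hnot => absurd (Finset.mem_range.mpr h1ω) hnot)]
    rw [if_pos ⟨rfl, rfl⟩, one_mul]
  -- integrability of terms
  have hint : ∀ j j', Integrable (fun ω =>
      (if Mc ω = j ∧ Mc2 ω = j' then (1:ℝ) else 0) * (h1 j ω * h2 j' ω)) ℙ := by
    intro j j'
    apply integrable_of_bound _ (C * C)
    · exact (Measurable.ite ((hM (measurableSet_singleton j)).inter
          (hM2 (measurableSet_singleton j'))) measurable_const measurable_const).mul
        ((hmeas_h1 j).mul (hmeas_h2 j'))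
    · intro ω
      rw [abs_mul, abs_mul]
      have hCC : |h1 j ω| * |h2 j' ω| ≤ C * C :=
        mul_le_mul (hbdd_h1 j ω) (hbdd_h2 j' ω) (abs_nonneg _) hC
      by_cases hc : Mc ω = j ∧ Mc2 ω = j'
      · simpa [hc] using hCC
      · simp [hc]
        positivity
  -- compute
  rw [integral_congr_ae hdecomp,
    integral_finset_sum _ (fun j _ => integrable_finset_sum _ (fun j' _ => hint j j'))]
  rw [Finset.sum_congr rfl (fun j _ =>
    integral_finset_sum _ (fun j' _ => hint j j'))]
  have hterm : ∀ j j' : ℕ, (∫ ω,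
      (if Mc ω = j ∧ Mc2 ω = j' then (1:ℝ) else 0) * (h1 j ω * h2 j' ω))
      = (ℙ {ω | Mc ω = j ∧ Mc2 ω = j'}).toReal *
          (stratVal n ν K W ℓ * stratVal n ν K W2 ℓ2) := by
    intro j j'
    rw [Et2 j j']
    rcases Nat.eq_zero_or_pos j with rfl | hjpos
    · have hz : ℙ {ω | Mc ω = 0 ∧ Mc2 ω = j'} = 0 :=
        le_antisymm ((measure_mono fun ω hω => hω.1).trans hP01.le) zero_le
      rw [hz]; simp
    rcases Nat.eq_zero_or_pos j' with rfl | hj'pos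
    · have hz : ℙ {ω | Mc ω = j ∧ Mc2 ω = 0} = 0 :=
        le_antisymm ((measure_mono fun ω hω => hω.2).trans hP02.le) zero_le
      rw [hz]; simp
    rw [show (∫ ω, ψ1 j (fun m => Ss m ω)) = stratVal n ν K W ℓ from
        exp_havg hSm hC hν hunif j hjpos,
      show (∫ ω, ψ2 j' (fun m => Ss2 m ω)) = stratVal n ν K W2 ℓ2 from
        exp_havg hSm2 hC hν hunif2 j' hj'pos]
  rw [Finset.sum_congr rfl (fun j _ => Finset.sum_congr rfl (fun j' _ => hterm j j'))]
  -- total mass of the grid is 1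
  have hgrid : ∀ j, ∑ j' ∈ Finset.range (B+2),
      (ℙ {ω | Mc ω = j ∧ Mc2 ω = j'}).toReal = (ℙ {ω | Mc ω = j}).toReal := by
    intro j
    rw [← ENNReal.toReal_sum (fun j' _ => measure_ne_top _ _)]
    congr 1
    have hdisj : (↑(Finset.range (B+2)) : Set ℕ).PairwiseDisjoint
        (fun j' => {ω | Mc ω = j ∧ Mc2 ω = j'}) := by
      intro a _ b _ hab
      refine Set.disjoint_left.mpr fun ω hωa hωb => hab (hωa.2.symm.trans hωb.2)
    have hmeasjj : ∀ j' ∈ Finset.range (B+2),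
        MeasurableSet {ω | Mc ω = j ∧ Mc2 ω = j'} := fun j' _ =>
      (hM (measurableSet_singleton j)).inter (hM2 (measurableSet_singleton j'))
    rw [← measure_biUnion_finset hdisj hmeasjj]
    have hset : (⋃ j' ∈ Finset.range (B+2), {ω | Mc ω = j ∧ Mc2 ω = j'})
        = {ω | Mc ω = j} ∩ {ω | Mc2 ω < B + 2} := by
      ext ω
      simp only [Set.mem_iUnion, Finset.mem_range, Set.mem_setOf_eq, Set.mem_inter_iff]
      constructor
      · rintro ⟨j', hj', hωj, hωj'⟩; exact ⟨hωj, hωj' ▸ hj'⟩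
      · rintro ⟨hωj, hlt⟩; exact ⟨Mc2 ω, hlt, hωj, rfl⟩
    rw [hset, measure_inter_conull ?_]
    have : ℙ {ω | ¬ Mc2 ω < B + 2} = 0 := by
      rw [← ae_iff]; exact hae2
    simpa [Set.compl_setOf] using this
  calc ∑ j ∈ Finset.range (B+2), ∑ j' ∈ Finset.range (B+2),
        (ℙ {ω | Mc ω = j ∧ Mc2 ω = j'}).toReal *
          (stratVal n ν K W ℓ * stratVal n ν K W2 ℓ2)
      = ∑ j ∈ Finset.range (B+2), (ℙ {ω | Mc ω = j}).toReal *
          (stratVal n ν K W ℓ * stratVal n ν K W2 ℓ2) := by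
        refine Finset.sum_congr rfl fun j _ => ?_
        rw [← Finset.sum_mul, hgrid j]
    _ = stratVal n ν K W ℓ * stratVal n ν K W2 ℓ2 := by
        rw [← Finset.sum_mul, hPsum1, one_mul]

end Strat

lemma count_inv_sum_le {Ω : Type*} [MeasureSpace Ω] [IsProbabilityMeasure (ℙ : Measure Ω)]
    (Mc : Ω → ℕ) (B : ℕ) (hB : 1 ≤ B) (p γ : ℝ) (hγ : 0 < γ) (hpγ : 1 / γ ≤ p) (hp1 : p ≤ 1)
    (hbin : ∀ j : ℕ, ℙ {ω | Mc ω = j + 1}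
      = ENNReal.ofReal ((B.choose j : ℝ) * p ^ j * (1 - p) ^ (B - j))) :
    ∑ j ∈ Finset.range (B + 2), (ℙ {ω | Mc ω = j}).toReal * ((j:ℝ))⁻¹ ≤ γ / B := by
  have hp0 : 0 < p := lt_of_lt_of_le (by positivity) hpγ
  have hq0 : (0:ℝ) ≤ 1 - p := by linarith
  rw [Finset.sum_range_succ' (fun j => (ℙ {ω | Mc ω = j}).toReal * ((j:ℝ))⁻¹) (B+1)]
  have h0 : (ℙ {ω | Mc ω = 0}).toReal * (((0:ℕ):ℝ))⁻¹ = 0 := by simp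
  rw [h0, add_zero]
  have hterm : ∀ i ∈ Finset.range (B + 1),
      (ℙ {ω | Mc ω = i + 1}).toReal * (((i + 1 : ℕ):ℝ))⁻¹
      = (B.choose i : ℝ) * p ^ i * (1 - p) ^ (B - i) * (((i:ℝ) + 1))⁻¹ := by
    intro i _
    rw [hbin i, ENNReal.toReal_ofReal (by positivity)]
    push_cast
    ring
  rw [Finset.sum_congr rfl hterm]
  exact binom_inv_sum_le B hB p hp0 hp1 γ hγ hpγ

/-- **Variance bound for the CII estimate (Theorem 4.2).** -/
theorem cii_estimate_variance_bound {Ω : Type*} [MeasureSpace Ω]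
    [IsProbabilityMeasure (ℙ : Measure Ω)]
    (n : ℕ) (ν : Finset (Fin n) → ℝ) (K : Finset (Fin n)) (hk : 2 ≤ K.card)
    (lam : ℕ → ℝ)
    (L : ℕ → Finset ℕ) (hL : ∀ w, L w ⊆ Finset.range (n - K.card + 1))
    (S : Finset (Fin n) → ℕ → ℕ → Ω → Finset (Fin n))
    (M : Finset (Fin n) → ℕ → Ω → ℕ)
    (B : ℕ) (hB : 1 ≤ B) (p : Finset (Fin n) → ℕ → ℝ)
    (hSmeas : ∀ W ℓ m, Measurable (S W ℓ m)) (hMmeas : ∀ W ℓ, Measurable (M W ℓ))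
    -- within each estimated stratum the samples are i.i.d. uniform on the stratum
    (hiid : ∀ W, W ⊆ K → ∀ ℓ ∈ L W.card,
      iIndepFun (m := fun _ => finsetMeasurableSpace n) (S W ℓ) ℙ)
    (hunif : ∀ W, W ⊆ K → ∀ ℓ ∈ L W.card, ∀ (m : ℕ) (T : Finset (Fin n)),
      ℙ {ω | S W ℓ m ω = T}
        = if T ∈ strata n K ℓ then ((strata n K ℓ).card : ℝ≥0∞)⁻¹ else 0)
    -- counts: `M_{W,ℓ} = 1 + Y_{W,ℓ}` with `Y_{W,ℓ} ~ Binomial(B̃, p_{W,ℓ})`,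
    -- `p_{W,ℓ} ≥ 1/γ_k`
    (hp : ∀ W, W ⊆ K → ∀ ℓ ∈ L W.card,
      1 / gam n K.card ≤ p W ℓ ∧ p W ℓ ≤ 1)
    (hbin : ∀ W, W ⊆ K → ∀ ℓ ∈ L W.card, ∀ j : ℕ,
      ℙ {ω | M W ℓ ω = j + 1}
        = ENNReal.ofReal ((B.choose j : ℝ) * p W ℓ ^ j * (1 - p W ℓ) ^ (B - j)))
    -- the sample sequences of distinct estimated strata are mutually independent
    (hseqIndep : iIndepFun
      (m := fun _ : EstIdx n K L => (inferInstance : MeasurableSpace (ℕ → Finset (Fin n))))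
      (fun p ω => fun m => S p.1.1 p.1.2 m ω) ℙ)
    -- and independent of the vector of all counts
    (hcountIndep : IndepFun
      (fun ω => fun q : EstIdx n K L => M q.1.1 q.1.2 ω)
      (fun ω => fun (q : EstIdx n K L) (m : ℕ) => S q.1.1 q.1.2 m ω) ℙ) :
    variance (IhatCII n ν K lam L S M) ℙ
      ≤ gam n K.card / B * ∑ W ∈ K.powerset, ∑ ℓ ∈ L W.card,
          ((n - K.card).choose ℓ : ℝ) ^ 2 * lam ℓ ^ 2 * stratVar n ν K W ℓ := by
  classical
  -- global bound on ν
  have hne : (Finset.univ : Finset (Finset (Fin n))).Nonempty := ⟨∅, Finset.mem_univ _⟩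
  set C := Finset.univ.sup' hne (fun T => |ν T|) with hCdef
  have hνC : ∀ T, |ν T| ≤ C := by
    intro T
    rw [hCdef]
    exact Finset.le_sup' (fun T => |ν T|) (Finset.mem_univ T)
  have hC0 : 0 ≤ C := le_trans (abs_nonneg _) (hνC ∅)
  -- positivity of gamma
  have hkn : K.card ≤ n := by
    simpa using Finset.card_le_univ K
  have hγpos : 0 < gam n K.card := by
    rw [gam]
    split_ifs with h2
    · have hn2 : 2 ≤ n := le_trans (le_of_eq h2.symm) hkn
      have : (1:ℝ) ≤ (n:ℝ) - 1 := by
        have : (2:ℝ) ≤ (n:ℝ) := by exact_mod_cast hn2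
        linarith
      nlinarith
    · have hk3 : 3 ≤ K.card := by omega
      have hn3 : 3 ≤ n := le_trans hk3 hkn
      have h1 : (0:ℝ) < (n:ℝ) ^ (K.card - 1) := by positivity
      have h2' : (1:ℝ) ≤ (n:ℝ) - K.card + 1 := by
        have : (K.card : ℝ) ≤ (n:ℝ) := by exact_mod_cast hkn
        linarith
      exact mul_pos h1 (pow_pos (by linarith) 2)
  have hBR : (1:ℝ) ≤ (B:ℝ) := by exact_mod_cast hB
  -- notation
  set E := K.powerset.sigma (fun W => L W.card) with hE
  set c : (Σ _ : Finset (Fin n), ℕ) → ℝ := fun q =>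
    ((n - K.card).choose q.2 : ℝ) * lam q.2 * (-1 : ℝ) ^ (K.card - q.1.card) with hc
  set X : Finset (Fin n) → ℕ → Ω → ℝ := fun W ℓ ω =>
    ((M W ℓ ω : ℝ))⁻¹ * ∑ m ∈ Finset.range (M W ℓ ω), ν (S W ℓ m ω ∪ W) with hX
  set C0 : ℝ := ∑ W ∈ K.powerset, ∑ ℓ ∈ Finset.range (n - K.card + 1) \ L W.card,
    c ⟨W, ℓ⟩ * stratVal n ν K W ℓ with hC0def
  set Y : Ω → ℝ := fun ω => ∑ q ∈ E, c q * X q.1 q.2 ω with hYdef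
  -- representation of the estimate
  have hrepr : IhatCII n ν K lam L S M = fun ω => C0 + Y ω := by
    funext ω
    calc IhatCII n ν K lam L S M ω
        = ∑ ℓ ∈ Finset.range (n - K.card + 1), ∑ W ∈ K.powerset,
            c ⟨W, ℓ⟩ * IhatStrat n ν K L S M W ℓ ω := by
          rw [IhatCII]
          refine Finset.sum_congr rfl fun ℓ _ => ?_
          rw [Finset.mul_sum]
          refine Finset.sum_congr rfl fun W _ => ?_
          rw [hc]; ring
      _ = ∑ W ∈ K.powerset, ∑ ℓ ∈ Finset.range (n - K.card + 1),
            c ⟨W, ℓ⟩ * IhatStrat n ν K L S M W ℓ ω := Finset.sum_comm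
      _ = ∑ W ∈ K.powerset,
            ((∑ ℓ ∈ Finset.range (n - K.card + 1) \ L W.card,
              c ⟨W, ℓ⟩ * stratVal n ν K W ℓ)
            + ∑ ℓ ∈ L W.card, c ⟨W, ℓ⟩ * X W ℓ ω) := by
          refine Finset.sum_congr rfl fun W hW => ?_
          rw [← Finset.sum_sdiff (hL W.card)]
          congr 1
          · refine Finset.sum_congr rfl fun ℓ hℓ => ?_
            rw [IhatStrat, if_neg (Finset.mem_sdiff.mp hℓ).2]
          · refine Finset.sum_congr rfl fun ℓ hℓ => ?_
            rw [IhatStrat, if_pos hℓ]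
      _ = C0 + Y ω := by
          rw [Finset.sum_add_distrib]
          congr 1
          exact Finset.sum_sigma' _ _ _
  -- measurability and boundedness of the X's
  have hXmeas : ∀ W ℓ, Measurable (X W ℓ) := by
    intro W ℓ
    have hF : Measurable (fun pr : Ω × ℕ =>
        ((pr.2 : ℝ))⁻¹ * ∑ m ∈ Finset.range pr.2, ν (S W ℓ m pr.1 ∪ W)) := by
      apply measurable_from_prod_countable_left
      intro j
      have hsm : ∀ m, Measurable fun ω => ν (S W ℓ m ω ∪ W) :=
        fun m => (measurable_finset_fun (fun T => ν (T ∪ W))).comp (hSmeas W ℓ m)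
      show Measurable fun a : Ω => ((j:ℝ))⁻¹ * ∑ m ∈ Finset.range j, ν (S W ℓ m a ∪ W)
      exact (Finset.measurable_sum _ (fun m _ => hsm m)).const_mul _
    exact hF.comp (measurable_id.prodMk (hMmeas W ℓ))
  have hXbdd : ∀ W ℓ ω, |X W ℓ ω| ≤ C := by
    intro W ℓ ω
    exact abs_avg_le hC0 _ _ (fun m => hνC _)
  have hXint : ∀ W ℓ, Integrable (X W ℓ) ℙ :=
    fun W ℓ => integrable_of_bound _ C (hXmeas W ℓ) (hXbdd W ℓ)
  have hXXint : ∀ W ℓ W' ℓ', Integrable (fun ω => X W ℓ ω * X W' ℓ' ω) ℙ := by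
    intro W ℓ W' ℓ'
    apply integrable_of_bound _ (C * C) ((hXmeas W ℓ).mul (hXmeas W' ℓ'))
    intro ω
    rw [Pi.mul_apply, abs_mul]
    exact mul_le_mul (hXbdd W ℓ ω) (hXbdd W' ℓ' ω) (abs_nonneg _) hC0
  -- membership data
  have hmemE : ∀ q ∈ E, q.1 ⊆ K ∧ q.2 ∈ L q.1.card := by
    intro q hq
    have := Finset.mem_sigma.mp hq
    exact ⟨Finset.mem_powerset.mp this.1, this.2⟩
  have hlle : ∀ q ∈ E, q.2 ≤ n - K.card := by
    intro q hq
    have := Finset.mem_range.mp (hL q.1.card (hmemE q hq).2)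
    omega
  -- per-stratum first and second moments
  have main1 : ∀ q ∈ E, ∫ ω, X q.1 q.2 ω = stratVal n ν K q.1 q.2 := by
    intro q hq
    obtain ⟨hsub, hql⟩ := hmemE q hq
    have hppair := hp q.1 hsub q.2 hql
    have hp0 : 0 ≤ p q.1 q.2 := le_trans (div_pos one_pos hγpos).le hppair.1
    have hMS : IndepFun (M q.1 q.2) (fun ω (m : ℕ) => S q.1 q.2 m ω) ℙ :=
      hcountIndep.comp
        (measurable_pi_apply ((⟨(q.1, q.2), hsub, hql⟩ : EstIdx n K L)))
        (measurable_pi_apply ((⟨(q.1, q.2), hsub, hql⟩ : EstIdx n K L)))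
    exact (strat_moments (hSmeas q.1 q.2) hC0 hνC (hlle q hq) (hiid q.1 hsub q.2 hql)
      (hunif q.1 hsub q.2 hql) (M q.1 q.2) (hMmeas q.1 q.2) B (p q.1 q.2) hp0 hppair.2
      (hbin q.1 hsub q.2 hql) hMS).1
  have main2 : ∀ q ∈ E, (∫ ω, X q.1 q.2 ω * X q.1 q.2 ω) - stratVal n ν K q.1 q.2 ^ 2
      ≤ gam n K.card / B * stratVar n ν K q.1 q.2 := by
    intro q hq
    obtain ⟨hsub, hql⟩ := hmemE q hq
    have hppair := hp q.1 hsub q.2 hql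
    have hp0 : 0 ≤ p q.1 q.2 := le_trans (div_pos one_pos hγpos).le hppair.1
    have hMS : IndepFun (M q.1 q.2) (fun ω (m : ℕ) => S q.1 q.2 m ω) ℙ :=
      hcountIndep.comp
        (measurable_pi_apply ((⟨(q.1, q.2), hsub, hql⟩ : EstIdx n K L)))
        (measurable_pi_apply ((⟨(q.1, q.2), hsub, hql⟩ : EstIdx n K L)))
    have h2 : ∫ ω, X q.1 q.2 ω ^ 2 = stratVal n ν K q.1 q.2 ^ 2 +
        (∑ j ∈ Finset.range (B + 2), (ℙ {ω | M q.1 q.2 ω = j}).toReal * ((j:ℝ))⁻¹) *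
          stratVar n ν K q.1 q.2 :=
      (strat_moments (hSmeas q.1 q.2) hC0 hνC (hlle q hq) (hiid q.1 hsub q.2 hql)
        (hunif q.1 hsub q.2 hql) (M q.1 q.2) (hMmeas q.1 q.2) B (p q.1 q.2) hp0 hppair.2
        (hbin q.1 hsub q.2 hql) hMS).2
    have he := count_inv_sum_le (M q.1 q.2) B hB (p q.1 q.2) (gam n K.card) hγpos
      hppair.1 hppair.2 (hbin q.1 hsub q.2 hql)
    have hV := stratVar_nonneg n ν K q.1 q.2
    have hsq : (∫ ω, X q.1 q.2 ω * X q.1 q.2 ω) = ∫ ω, X q.1 q.2 ω ^ 2 := by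
      refine integral_congr_ae (Filter.Eventually.of_forall fun ω => ?_)
      simp [sq]
    rw [hsq, h2]
    have : stratVal n ν K q.1 q.2 ^ 2 +
        (∑ j ∈ Finset.range (B + 2), (ℙ {ω | M q.1 q.2 ω = j}).toReal * ((j:ℝ))⁻¹) *
          stratVar n ν K q.1 q.2 - stratVal n ν K q.1 q.2 ^ 2
        = (∑ j ∈ Finset.range (B + 2), (ℙ {ω | M q.1 q.2 ω = j}).toReal * ((j:ℝ))⁻¹) *
          stratVar n ν K q.1 q.2 := by ring
    rw [this]
    exact mul_le_mul_of_nonneg_right he hV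
  -- cross moments
  have mainCross : ∀ q ∈ E, ∀ r ∈ E, q ≠ r →
      ∫ ω, X q.1 q.2 ω * X r.1 r.2 ω
        = stratVal n ν K q.1 q.2 * stratVal n ν K r.1 r.2 := by
    intro q hq r hr hqr
    obtain ⟨hsubq, hqlq⟩ := hmemE q hq
    obtain ⟨hsubr, hqlr⟩ := hmemE r hr
    have hpq := hp q.1 hsubq q.2 hqlq
    have hpr := hp r.1 hsubr r.2 hqlr
    have hp0q : 0 ≤ p q.1 q.2 := le_trans (div_pos one_pos hγpos).le hpq.1
    have hp0r : 0 ≤ p r.1 r.2 := le_trans (div_pos one_pos hγpos).le hpr.1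
    have hne' : (⟨(q.1, q.2), hsubq, hqlq⟩ : EstIdx n K L)
        ≠ (⟨(r.1, r.2), hsubr, hqlr⟩ : EstIdx n K L) := by
      intro h
      apply hqr
      have h1 : (q.1, q.2) = (r.1, r.2) := congrArg Subtype.val h
      exact Sigma.ext (congrArg Prod.fst h1) (heq_of_eq (congrArg Prod.snd h1))
    have hseq : IndepFun (fun ω (m : ℕ) => S q.1 q.2 m ω)
        (fun ω (m : ℕ) => S r.1 r.2 m ω) ℙ := hseqIndep.indepFun hne'
    have hMM : IndepFun (fun ω => (M q.1 q.2 ω, M r.1 r.2 ω))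
        (fun ω => ((fun m => S q.1 q.2 m ω), (fun m => S r.1 r.2 m ω))) ℙ :=
      hcountIndep.comp
        ((measurable_pi_apply ((⟨(q.1, q.2), hsubq, hqlq⟩ : EstIdx n K L))).prodMk
          (measurable_pi_apply ((⟨(r.1, r.2), hsubr, hqlr⟩ : EstIdx n K L))))
        ((measurable_pi_apply ((⟨(q.1, q.2), hsubq, hqlq⟩ : EstIdx n K L))).prodMk
          (measurable_pi_apply ((⟨(r.1, r.2), hsubr, hqlr⟩ : EstIdx n K L))))
    exact cross_moment (hSmeas q.1 q.2) (hSmeas r.1 r.2) hC0 hνC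
      (hunif q.1 hsubq q.2 hqlq) (hunif r.1 hsubr r.2 hqlr)
      (M q.1 q.2) (M r.1 r.2) (hMmeas q.1 q.2) (hMmeas r.1 r.2)
      B (p q.1 q.2) (p r.1 r.2) hp0q hpq.2 hp0r hpr.2
      (hbin q.1 hsubq q.2 hqlq) (hbin r.1 hsubr r.2 hqlr) hseq hMM
  -- integrability / MemLp of the estimator
  have hYmeas : Measurable Y :=
    Finset.measurable_sum _ (fun q _ => (hXmeas q.1 q.2).const_mul _)
  have hYbdd : ∀ ω, |Y ω| ≤ ∑ q ∈ E, |c q| * C := by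
    intro ω
    refine (Finset.abs_sum_le_sum_abs _ _).trans ?_
    refine Finset.sum_le_sum fun q _ => ?_
    rw [abs_mul]
    exact mul_le_mul_of_nonneg_left (hXbdd _ _ ω) (abs_nonneg _)
  have hYint : Integrable Y ℙ := integrable_of_bound _ _ hYmeas hYbdd
  have hGmem : MemLp (fun ω => C0 + Y ω) 2 ℙ := by
    apply MemLp.of_bound (measurable_const.add hYmeas).aestronglyMeasurable
      (|C0| + ∑ q ∈ E, |c q| * C)
    refine Filter.Eventually.of_forall fun ω => ?_
    rw [Real.norm_eq_abs]
    calc |C0 + Y ω| ≤ |C0| + |Y ω| := abs_add_le _ _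
      _ ≤ _ := by linarith [hYbdd ω]
  rw [hrepr, variance_eq_sub hGmem]
  -- means
  have hEY : ∫ ω, Y ω = ∑ q ∈ E, c q * stratVal n ν K q.1 q.2 := by
    rw [show (fun ω => Y ω) = Y from rfl, hYdef,
      integral_finset_sum _ (fun q _ => (hXint q.1 q.2).const_mul _)]
    refine Finset.sum_congr rfl fun q hq => ?_
    rw [integral_const_mul _, main1 q hq]
  have hEY2 : ∫ ω, Y ω ^ 2
      = ∑ q ∈ E, ∑ r ∈ E, c q * c r * ∫ ω, X q.1 q.2 ω * X r.1 r.2 ω := by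
    have hexp : ∀ ω, Y ω ^ 2
        = ∑ q ∈ E, ∑ r ∈ E, c q * c r * (X q.1 q.2 ω * X r.1 r.2 ω) := by
      intro ω
      rw [hYdef, sq, Finset.sum_mul_sum]
      exact Finset.sum_congr rfl fun q _ => Finset.sum_congr rfl fun r _ => by ring
    rw [integral_congr_ae (Filter.Eventually.of_forall hexp),
      integral_finset_sum _ (fun q _ => integrable_finset_sum _
        (fun r _ => ((hXXint _ _ _ _).const_mul _)))]
    refine Finset.sum_congr rfl fun q _ => ?_
    rw [integral_finset_sum _ (fun r _ => (hXXint _ _ _ _).const_mul _)]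
    exact Finset.sum_congr rfl fun r _ => integral_const_mul _ _
  have hY2int : Integrable (fun ω => Y ω ^ 2) ℙ := by
    apply integrable_of_bound _ ((∑ q ∈ E, |c q| * C) * (∑ q ∈ E, |c q| * C))
      (hYmeas.pow_const 2)
    intro ω
    rw [sq, abs_mul]
    exact mul_le_mul (hYbdd ω) (hYbdd ω) (abs_nonneg _)
      (le_trans (abs_nonneg _) (hYbdd ω))
  have hEG : ∫ ω, (C0 + Y ω) = C0 + ∫ ω, Y ω := by
    rw [integral_add (integrable_const _) hYint, integral_const]
    simp
  have hEG2 : ∫ ω, (C0 + Y ω) ^ 2 = C0 ^ 2 + 2 * C0 * (∫ ω, Y ω) + ∫ ω, Y ω ^ 2 := by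
    have h1 : ∀ ω, (C0 + Y ω) ^ 2 = (C0 ^ 2 + (2 * C0) * Y ω) + Y ω ^ 2 := fun ω => by ring
    have hint2 : Integrable (fun ω => (2 * C0) * Y ω) ℙ := hYint.const_mul _
    have hint1 : Integrable (fun ω => C0 ^ 2 + (2 * C0) * Y ω) ℙ :=
      (integrable_const _).add hint2
    rw [integral_congr_ae (Filter.Eventually.of_forall h1),
      integral_add hint1 hY2int, integral_add (integrable_const _) hint2,
      integral_const, integral_const_mul]
    simp
  show (∫ ω, (C0 + Y ω) ^ 2) - (∫ ω, (C0 + Y ω)) ^ 2 ≤ _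
  rw [hEG2, hEG, hEY, hEY2]
  have hmY2 : (C0 ^ 2 + 2 * C0 * (∑ q ∈ E, c q * stratVal n ν K q.1 q.2)
        + ∑ q ∈ E, ∑ r ∈ E, c q * c r * ∫ ω, X q.1 q.2 ω * X r.1 r.2 ω)
        - (C0 + ∑ q ∈ E, c q * stratVal n ν K q.1 q.2) ^ 2
      = ∑ q ∈ E, ∑ r ∈ E,
          (c q * c r * (∫ ω, X q.1 q.2 ω * X r.1 r.2 ω)
            - c q * c r * (stratVal n ν K q.1 q.2 * stratVal n ν K r.1 r.2)) := by
    have hs : (∑ q ∈ E, c q * stratVal n ν K q.1 q.2) ^ 2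
        = ∑ q ∈ E, ∑ r ∈ E,
            c q * c r * (stratVal n ν K q.1 q.2 * stratVal n ν K r.1 r.2) := by
      rw [sq, Finset.sum_mul_sum]
      exact Finset.sum_congr rfl fun q _ => Finset.sum_congr rfl fun r _ => by ring
    rw [Finset.sum_congr rfl (fun q (_ : q ∈ E) => Finset.sum_sub_distrib _ _),
      Finset.sum_sub_distrib, ← hs]
    ring
  rw [hmY2]
  have hcollapse : ∀ q ∈ E,
      (∑ r ∈ E, (c q * c r * (∫ ω, X q.1 q.2 ω * X r.1 r.2 ω)
        - c q * c r * (stratVal n ν K q.1 q.2 * stratVal n ν K r.1 r.2)))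
      = c q * c q * ((∫ ω, X q.1 q.2 ω * X q.1 q.2 ω) - stratVal n ν K q.1 q.2 ^ 2) := by
    intro q hq
    rw [← Finset.add_sum_erase _ _ hq]
    have hzero : ∑ r ∈ E.erase q,
        (c q * c r * (∫ ω, X q.1 q.2 ω * X r.1 r.2 ω)
          - c q * c r * (stratVal n ν K q.1 q.2 * stratVal n ν K r.1 r.2)) = 0 := by
      refine Finset.sum_eq_zero fun r hr => ?_
      rw [mainCross q hq r (Finset.mem_of_mem_erase hr)
        (Ne.symm (Finset.ne_of_mem_erase hr))]
      ring
    rw [hzero, add_zero]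
    ring
  rw [Finset.sum_congr rfl hcollapse]
  have hfinal : ∑ q ∈ E, c q * c q *
      ((∫ ω, X q.1 q.2 ω * X q.1 q.2 ω) - stratVal n ν K q.1 q.2 ^ 2)
      ≤ ∑ q ∈ E, c q * c q * (gam n K.card / B * stratVar n ν K q.1 q.2) := by
    refine Finset.sum_le_sum fun q hq => ?_
    exact mul_le_mul_of_nonneg_left (main2 q hq) (mul_self_nonneg _)
  refine hfinal.trans ?_
  have hRHS : gam n K.card / B * ∑ W ∈ K.powerset, ∑ ℓ ∈ L W.card,
      ((n - K.card).choose ℓ : ℝ) ^ 2 * lam ℓ ^ 2 * stratVar n ν K W ℓ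
      = ∑ q ∈ E, gam n K.card / B *
        (((n - K.card).choose q.2 : ℝ) ^ 2 * lam q.2 ^ 2 * stratVar n ν K q.1 q.2) := by
    rw [Finset.mul_sum,
      Finset.sum_congr rfl (fun W (_ : W ∈ K.powerset) => Finset.mul_sum _ _ _)]
    exact Finset.sum_sigma' _ _ _
  rw [hRHS]
  refine le_of_eq (Finset.sum_congr rfl fun q _ => ?_)
  have hcsq : c q * c q = ((n - K.card).choose q.2 : ℝ) ^ 2 * lam q.2 ^ 2 := by
    have hsq1 : ((-1:ℝ) ^ (K.card - q.1.card)) ^ 2 = 1 := by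
      rw [← pow_mul, mul_comm, pow_mul]
      norm_num
    calc c q * c q
        = (((n - K.card).choose q.2 : ℝ)) ^ 2 * lam q.2 ^ 2 *
            ((-1:ℝ) ^ (K.card - q.1.card)) ^ 2 := by simp only [hc]; ring
      _ = _ := by rw [hsq1, mul_one]
  rw [hcsq]
  ring
end
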